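/- arXiv:1906.03149 — 7 statements merged into one kernel-verified Lean document; each statement's English description precedes it below -/
import Mathlib

section
/- For every odd prime p there exists a Steiner triple system S on a 3p-element vertex set V such that for every subset V' ⊆ V with 2·|V'| ≤ |V|, one has |N(V')| ≥ |V'| − 3. -/
open Finset

variable {α : Type*}

/-- A pair of (distinct) vertices is covered if it lies in some triple of `F`. -/
def Covered [DecidableEq α] (F : Finset (Finset α)) (x y : α) : Prop :=
  ∃ T ∈ F, x ∈ T ∧ y ∈ T

instance [DecidableEq α] (F : Finset (Finset α)) (x y : α) : Decidable (Covered F x y) :=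
  inferInstanceAs (Decidable (∃ T ∈ F, x ∈ T ∧ y ∈ T))

/-- Linear triple system on `V`. -/
def IsLinearTS [DecidableEq α] (V : Finset α) (F : Finset (Finset α)) : Prop :=
  (∀ T ∈ F, T ⊆ V ∧ T.card = 3) ∧
    ∀ x ∈ V, ∀ y ∈ V, x ≠ y → (F.filter fun T => x ∈ T ∧ y ∈ T).card ≤ 1

/-- Steiner triple system on `V`. -/
def IsSTS [DecidableEq α] (V : Finset α) (F : Finset (Finset α)) : Prop :=
  (∀ T ∈ F, T ⊆ V ∧ T.card = 3) ∧
    ∀ x ∈ V, ∀ y ∈ V, x ≠ y → (F.filter fun T => x ∈ T ∧ y ∈ T).card = 1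

/-- Neighbourhood of `V'` with respect to the triple system `F` on `V`. -/
def nbhd [DecidableEq α] (V : Finset α) (F : Finset (Finset α)) (V' : Finset α) : Finset α :=
  (V \ V').filter fun z => ∃ x ∈ V', ∃ y ∈ V', x ≠ y ∧ ({x, y, z} : Finset α) ∈ F

/-- `F` is spreading: the closure of every nontrivial subset is `V`. -/
def IsSpreading [DecidableEq α] (V : Finset α) (F : Finset (Finset α)) : Prop :=
  ∀ V' ⊆ V, 3 ≤ V'.card → V' ∉ F →
    ∀ W, V' ⊆ W → W ⊆ V → nbhd V F W = ∅ → W = V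

/-- `F` is weakly spreading. -/
def IsWeaklySpreading [DecidableEq α] (V : Finset α) (F : Finset (Finset α)) : Prop :=
  ∀ F' ⊆ F, 2 ≤ F'.card →
    ∀ W, F'.biUnion id ⊆ W → W ⊆ V → nbhd V F W = ∅ → W = V

/-- `Val(T)`: number of private neighbours of the triple `T`. -/
def valT [DecidableEq α] (V : Finset α) (F : Finset (Finset α)) (T : Finset α) : ℕ :=
  ((V \ T).filter fun v => (T.filter fun t => Covered F v t).card = 1).card

/-- Two triples are adjacent if pairs of each span a `C₄` in the complement of the skeleton. -/
def AdjT [DecidableEq α] (F : Finset (Finset α)) (T T' : Finset α) : Prop :=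
  ∃ v₁ ∈ T, ∃ v₂ ∈ T, ∃ u₁ ∈ T', ∃ u₂ ∈ T',
    v₁ ≠ v₂ ∧ u₁ ≠ u₂ ∧ v₁ ≠ u₁ ∧ v₁ ≠ u₂ ∧ v₂ ≠ u₁ ∧ v₂ ≠ u₂ ∧
    ¬Covered F v₁ u₁ ∧ ¬Covered F u₁ v₂ ∧ ¬Covered F v₂ u₂ ∧ ¬Covered F u₂ v₁

instance [DecidableEq α] (F : Finset (Finset α)) (T T' : Finset α) : Decidable (AdjT F T T') :=
  inferInstanceAs (Decidable (∃ v₁ ∈ T, ∃ v₂ ∈ T, ∃ u₁ ∈ T', ∃ u₂ ∈ T',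
    v₁ ≠ v₂ ∧ u₁ ≠ u₂ ∧ v₁ ≠ u₁ ∧ v₁ ≠ u₂ ∧ v₂ ≠ u₁ ∧ v₂ ≠ u₂ ∧
    ¬Covered F v₁ u₁ ∧ ¬Covered F u₁ v₂ ∧ ¬Covered F v₂ u₂ ∧ ¬Covered F u₂ v₁))



set_option linter.unusedSectionVars false
variable {p : ℕ} [NeZero p]

abbrev Pt (p : ℕ) := ZMod p × ZMod 3
def vertT (x : ZMod p) : Finset (Pt p) := {(x,0),(x,1),(x,2)}
def crossT (x y : ZMod p) (i : ZMod 3) : Finset (Pt p) :=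
  {(x,i),(y,i),((2 : ZMod p)⁻¹*(x+y), i+1)}
def bose (p : ℕ) [NeZero p] : Finset (Finset (Pt p)) :=
  ((univ : Finset (ZMod p)).image vertT) ∪
    (((univ : Finset (ZMod p)) ×ˢ (univ : Finset (ZMod p)) ×ˢ (univ : Finset (ZMod 3))).filter
      fun t => t.1 ≠ t.2.1).image fun t => crossT t.1 t.2.1 t.2.2
lemma mem_bose {T : Finset (Pt p)} :
    T ∈ bose p ↔ (∃ x, T = vertT x) ∨ ∃ x y i, x ≠ y ∧ T = crossT x y i := by
  simp only [bose, mem_union, mem_image, mem_filter, mem_product, mem_univ, true_and]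
  constructor
  · rintro (⟨a, rfl⟩ | ⟨⟨x, y, i⟩, hxy, rfl⟩)
    exacts [Or.inl ⟨a, rfl⟩, Or.inr ⟨x, y, i, hxy, rfl⟩]
  · rintro (⟨a, rfl⟩ | ⟨x, y, i, hxy, rfl⟩)
    exacts [Or.inl ⟨a, rfl⟩, Or.inr ⟨(x, y, i), hxy, rfl⟩]
lemma mem_vertT {a : Pt p} {x : ZMod p} :
    a ∈ vertT x ↔ a = (x,0) ∨ a = (x,1) ∨ a = (x,2) := by simp [vertT]
lemma mem_crossT {a : Pt p} {x y : ZMod p} {i : ZMod 3} :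
    a ∈ crossT x y i ↔ a = (x,i) ∨ a = (y,i) ∨ a = ((2 : ZMod p)⁻¹*(x+y), i+1) := by
  simp [crossT]
lemma crossT_comm (x y : ZMod p) (i : ZMod 3) : crossT x y i = crossT y x i := by
  simp [crossT, add_comm y x]; ext a; simp; tauto

lemma half_two_mul [Fact p.Prime] (h2 : (2 : ZMod p) ≠ 0) (z : ZMod p) : (2 : ZMod p)⁻¹ * (2 * z) = z := by
  rw [← mul_assoc, inv_mul_cancel₀ h2, one_mul]

lemma eq_of_half [Fact p.Prime] (h2 : (2 : ZMod p) ≠ 0) (x y b : ZMod p)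
    (h : (2 : ZMod p)⁻¹ * (x + y) = b) : y = 2 * b - x := by
  have h' : (2 : ZMod p) * ((2 : ZMod p)⁻¹ * (x + y)) = 2 * b := by rw [h]
  rw [← mul_assoc, mul_inv_cancel₀ h2, one_mul] at h'
  rw [← h']; ring

lemma two_inj [Fact p.Prime] (h2 : (2 : ZMod p) ≠ 0) {x y : ZMod p} (h : 2 * x = 2 * y) : x = y :=
  mul_left_cancel₀ h2 h

lemma z3A : ∀ i l : ZMod 3, i = l → i = l + 1 → False := by decide
lemma z3B : ∀ i l : ZMod 3, i = l → i + 1 = l → False := by decide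
lemma z3C : ∀ i l : ZMod 3, i = l + 1 → i + 1 = l → False := by decide
lemma z3D : ∀ i l : ZMod 3, i = l + 1 → i + 1 = l + 1 → False := by decide
lemma z3cases : ∀ i j : ZMod 3, i = j ∨ j = i + 1 ∨ i = j + 1 := by decide
lemma z3vals : ∀ i : ZMod 3, i = 0 ∨ i = 1 ∨ i = 2 := by decide

lemma mem_vertT_self (a : ZMod p) (l : ZMod 3) : (a, l) ∈ vertT a := by
  rcases z3vals l with h|h|h <;> rw [h, mem_vertT] <;> tauto

lemma cover_oriented [Fact p.Prime] (h2 : (2 : ZMod p) ≠ 0) (a b : ZMod p) (i j : ZMod 3)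
    (huv : (a,i) ≠ (b,j)) (hlev : j = i ∨ j = i + 1) :
    ∃ T₀ ∈ bose p, (a,i) ∈ T₀ ∧ (b,j) ∈ T₀ ∧
      ∀ T ∈ bose p, (a,i) ∈ T → (b,j) ∈ T → T = T₀ := by
  rcases hlev with rfl | rfl
  · -- same level (surviving level variable is `j`)
    have hab : a ≠ b := fun h => huv (by rw [h])
    refine ⟨crossT a b j, mem_bose.2 (Or.inr ⟨a, b, j, hab, rfl⟩),
      mem_crossT.2 (Or.inl rfl), mem_crossT.2 (Or.inr (Or.inl rfl)), ?_⟩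
    intro T hT hu hv
    rcases mem_bose.1 hT with ⟨x, rfl⟩ | ⟨x, y, l, hxy, rfl⟩
    · rw [mem_vertT] at hu hv
      have hax : a = x := by rcases hu with h|h|h <;> exact congrArg Prod.fst h
      have hbx : b = x := by rcases hv with h|h|h <;> exact congrArg Prod.fst h
      exact absurd (hax.trans hbx.symm) hab
    · simp only [mem_crossT, Prod.mk.injEq] at hu hv
      rcases hu with ⟨hu1,hu2⟩|⟨hu1,hu2⟩|⟨hu1,hu2⟩ <;>
        rcases hv with ⟨hv1,hv2⟩|⟨hv1,hv2⟩|⟨hv1,hv2⟩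
      · exact absurd (hu1.trans hv1.symm) hab
      · rw [← hu1, ← hv1, ← hu2]
      · exact (z3A j l hu2 hv2).elim
      · rw [← hv1, ← hu1, ← hu2]; exact crossT_comm b a j
      · exact absurd (hu1.trans hv1.symm) hab
      · exact (z3A j l hu2 hv2).elim
      · exact (z3A j l hv2 hu2).elim
      · exact (z3A j l hv2 hu2).elim
      · exact absurd (hu1.trans hv1.symm) hab
  · -- levels i and i+1
    by_cases hab : a = b
    · subst hab
      refine ⟨vertT a, mem_bose.2 (Or.inl ⟨a, rfl⟩),
        mem_vertT_self a i, mem_vertT_self a (i+1), ?_⟩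
      intro T hT hu hv
      rcases mem_bose.1 hT with ⟨x, rfl⟩ | ⟨x, y, l, hxy, rfl⟩
      · rw [mem_vertT] at hu
        have hax : a = x := by rcases hu with h|h|h <;> exact congrArg Prod.fst h
        rw [hax]
      · exfalso
        simp only [mem_crossT, Prod.mk.injEq] at hu hv
        rcases hu with ⟨hu1,hu2⟩|⟨hu1,hu2⟩|⟨hu1,hu2⟩ <;>
          rcases hv with ⟨hv1,hv2⟩|⟨hv1,hv2⟩|⟨hv1,hv2⟩
        · exact z3B i l hu2 hv2
        · exact z3B i l hu2 hv2
        · have hy : y = 2*a - x := eq_of_half h2 x y a hv1.symm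
          rw [hu1] at hy
          have hyx : y = x := by rw [hy]; ring
          exact hxy hyx.symm
        · exact z3B i l hu2 hv2
        · exact z3B i l hu2 hv2
        · have hcm : (2 : ZMod p)⁻¹ * (y + x) = a := by rw [add_comm]; exact hv1.symm
          have hx : x = 2*a - y := eq_of_half h2 y x a hcm
          rw [hu1] at hx
          have hxy' : x = y := by rw [hx]; ring
          exact hxy hxy'
        · exact z3C i l hu2 hv2
        · exact z3C i l hu2 hv2
        · exact z3D i l hu2 hv2
    · have hne : a ≠ 2*b - a := by
        intro h
        have h' : 2*a = 2*b := by nth_rewrite 1 [two_mul]; nth_rewrite 2 [h]; ring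
        exact hab (two_inj h2 h')
      have hhalf : (2 : ZMod p)⁻¹ * (a + (2*b - a)) = b := by
        have : a + (2*b - a) = 2*b := by ring
        rw [this, half_two_mul h2]
      refine ⟨crossT a (2*b - a) i, mem_bose.2 (Or.inr ⟨a, 2*b-a, i, hne, rfl⟩),
        mem_crossT.2 (Or.inl rfl), mem_crossT.2 (Or.inr (Or.inr (by rw [hhalf]))), ?_⟩
      intro T hT hu hv
      rcases mem_bose.1 hT with ⟨x, rfl⟩ | ⟨x, y, l, hxy, rfl⟩
      · exfalso
        rw [mem_vertT] at hu hv
        have hax : a = x := by rcases hu with h|h|h <;> exact congrArg Prod.fst h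
        have hbx : b = x := by rcases hv with h|h|h <;> exact congrArg Prod.fst h
        exact hab (hax.trans hbx.symm)
      · simp only [mem_crossT, Prod.mk.injEq] at hu hv
        rcases hu with ⟨hu1,hu2⟩|⟨hu1,hu2⟩|⟨hu1,hu2⟩ <;>
          rcases hv with ⟨hv1,hv2⟩|⟨hv1,hv2⟩|⟨hv1,hv2⟩
        · exact (z3B i l hu2 hv2).elim
        · exact (z3B i l hu2 hv2).elim
        · have hy : y = 2*b - x := eq_of_half h2 x y b hv1.symm
          rw [hy, ← hu1, ← hu2]
        · exact (z3B i l hu2 hv2).elim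
        · exact (z3B i l hu2 hv2).elim
        · have hcm : (2 : ZMod p)⁻¹ * (y + x) = b := by rw [add_comm]; exact hv1.symm
          have hx : x = 2*b - y := eq_of_half h2 y x b hcm
          rw [hx, ← hu1, ← hu2]; exact crossT_comm _ _ _
        · exact (z3C i l hu2 hv2).elim
        · exact (z3C i l hu2 hv2).elim
        · exact absurd (hu1.trans hv1.symm) hab


lemma vertT_card (x : ZMod p) : (vertT x).card = 3 := by
  rw [vertT, card_insert_of_notMem, card_insert_of_notMem, card_singleton] <;>
    simp [Prod.ext_iff] <;> decide

lemma crossT_card {x y : ZMod p} (i : ZMod 3) (hxy : x ≠ y) : (crossT x y i).card = 3 := by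
  rw [crossT, card_insert_of_notMem, card_insert_of_notMem, card_singleton]
  · simp only [mem_singleton, Prod.ext_iff, not_and]
    intro _ h; exact absurd h (fun hh => z3A i i rfl hh)
  · simp only [mem_insert, mem_singleton, Prod.ext_iff, not_or, not_and]
    exact ⟨fun h _ => hxy h, fun _ h => absurd h (fun hh => z3A i i rfl hh)⟩

lemma bose_pair_card [Fact p.Prime] (h2 : (2 : ZMod p) ≠ 0) {u v : Pt p} (huv : u ≠ v) :
    ((bose p).filter fun T => u ∈ T ∧ v ∈ T).card = 1 := by
  have main : ∀ (a b : ZMod p) (i j : ZMod 3), (a,i) ≠ (b,j) → (j = i ∨ j = i+1) →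
      ((bose p).filter fun T => (a,i) ∈ T ∧ (b,j) ∈ T).card = 1 := by
    intro a b i j huv hlev
    obtain ⟨T₀, hS, hu, hv, huniq⟩ := cover_oriented h2 a b i j huv hlev
    rw [Finset.card_eq_one]
    refine ⟨T₀, Finset.eq_singleton_iff_unique_mem.2 ⟨mem_filter.2 ⟨hS, hu, hv⟩, ?_⟩⟩
    intro T hT
    obtain ⟨h1, h2', h3⟩ := mem_filter.1 hT
    exact huniq T h1 h2' h3
  obtain ⟨a, i⟩ := u; obtain ⟨b, j⟩ := v
  rcases z3cases i j with h|h|h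
  · exact main a b i j huv (Or.inl h.symm)
  · exact main a b i j huv (Or.inr h)
  · have hsw := main b a j i (Ne.symm huv) (Or.inr h)
    rw [← hsw]
    apply congrArg
    apply filter_congr
    intro T _
    exact and_comm

lemma bose_isSTS [Fact p.Prime] (h2 : (2 : ZMod p) ≠ 0) :
    IsSTS (univ : Finset (Pt p)) (bose p) := by
  constructor
  · intro T hT
    refine ⟨subset_univ T, ?_⟩
    rcases mem_bose.1 hT with ⟨x, rfl⟩ | ⟨x, y, l, hxy, rfl⟩
    · exact vertT_card x
    · exact crossT_card l hxy
  · intro x _ y _ hxy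
    exact bose_pair_card h2 hxy

open Pointwise


def levset (W : Finset (Pt p)) (i : ZMod 3) : Finset (ZMod p) :=
  (W.filter fun v => v.2 = i).image Prod.fst

lemma mem_levset {W : Finset (Pt p)} {x : ZMod p} {i : ZMod 3} :
    x ∈ levset W i ↔ (x, i) ∈ W := by
  constructor
  · intro h
    obtain ⟨⟨x', i'⟩, hmem, rfl⟩ := mem_image.1 h
    obtain ⟨hW, hi⟩ := mem_filter.1 hmem
    dsimp only at hi ⊢
    rwa [hi] at hW
  · intro h
    exact mem_image.2 ⟨(x,i), mem_filter.2 ⟨h, rfl⟩, rfl⟩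

lemma sum3 (f : ZMod 3 → ℕ) : ∑ i, f i = f 0 + (f 1 + f 2) := by
  rw [show (univ : Finset (ZMod 3)) = {0,1,2} from by decide,
    Finset.sum_insert (by decide), Finset.sum_insert (by decide), Finset.sum_singleton]

lemma card_levset_sum (W : Finset (Pt p)) :
    W.card = (levset W 0).card + ((levset W 1).card + (levset W 2).card) := by
  have h1 : W.card = ∑ i : ZMod 3, (W.filter fun v => v.2 = i).card :=
    card_eq_sum_card_fiberwise (fun x _ => mem_univ _)
  have h2 : ∀ i, (levset W i).card = (W.filter fun v => v.2 = i).card := by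
    intro i
    apply card_image_of_injOn
    intro u hu v hv huv
    have hu2 := (mem_filter.1 hu).2
    have hv2 := (mem_filter.1 hv).2
    exact Prod.ext huv (hu2.trans hv2.symm)
  rw [h1, sum3]
  simp [h2]

section Nbr
variable [Fact p.Prime] (h2 : (2 : ZMod p) ≠ 0) (W : Finset (Pt p))

lemma z3E : ∀ i : ZMod 3, i + 2 + 1 = i := by decide
lemma z3F : ∀ i : ZMod 3, i ≠ i + 1 := by decide
lemma z3G : ∀ i : ZMod 3, ({i+1,i+2,i} : Finset (ZMod 3)) = {0,1,2} := by decide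
lemma z3H : ∀ i : ZMod 3, i + 1 ≠ i + 2 := by decide

include h2 in
lemma nbr_T (x m z : ZMod p) (i : ZMod 3) (hx : (x,i) ∈ W) (hm : (m,i+1) ∈ W)
    (hz : z = 2*m - x) (hzW : (z,i) ∉ W) :
    (z,i) ∈ nbhd univ (bose p) W := by
  have hxz : x ≠ z := fun h => hzW (h ▸ hx)
  have hm2 : (2 : ZMod p)⁻¹ * (x + z) = m := by
    rw [hz, show x + (2*m - x) = 2*m from by ring, half_two_mul h2]
  have hset : ({((x : ZMod p),i), ((m : ZMod p),i+1), ((z : ZMod p),i)} : Finset (Pt p)) =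
      crossT x z i := by
    rw [crossT, hm2, Finset.pair_comm ((m : ZMod p),i+1) ((z : ZMod p),i)]
  refine mem_filter.2 ⟨mem_sdiff.2 ⟨mem_univ _, hzW⟩, (x,i), hx, (m,i+1), hm, ?_, ?_⟩
  · intro h
    exact z3F i (congrArg Prod.snd h)
  · rw [hset]
    exact mem_bose.2 (Or.inr ⟨x, z, i, hxz, rfl⟩)

lemma nbr_M (x y z : ZMod p) (i : ZMod 3) (hx : (x,i+2) ∈ W) (hy : (y,i+2) ∈ W)
    (hxy : x ≠ y) (hz : z = (2 : ZMod p)⁻¹*(x+y)) (hzW : (z,i) ∉ W) :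
    (z,i) ∈ nbhd univ (bose p) W := by
  have hset : ({((x : ZMod p),i+2), ((y : ZMod p),i+2), ((z : ZMod p),i)} : Finset (Pt p)) =
      crossT x y (i+2) := by
    rw [crossT, ← hz, z3E i]
  refine mem_filter.2 ⟨mem_sdiff.2 ⟨mem_univ _, hzW⟩, (x,i+2), hx, (y,i+2), hy, ?_, ?_⟩
  · intro h
    exact hxy (congrArg Prod.fst h)
  · rw [hset]
    exact mem_bose.2 (Or.inr ⟨x, y, i+2, hxy, rfl⟩)

lemma nbr_W (z : ZMod p) (i : ZMod 3) (hz1 : (z,i+1) ∈ W) (hz2 : (z,i+2) ∈ W)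
    (hz0 : (z,i) ∉ W) :
    (z,i) ∈ nbhd univ (bose p) W := by
  have hset : ({((z : ZMod p),i+1), ((z : ZMod p),i+2), ((z : ZMod p),i)} : Finset (Pt p)) =
      vertT z := by
    have himg : ∀ (s : Finset (ZMod 3)) (a b c : ZMod 3), s = {a, b, c} →
        s.image (fun l => ((z : ZMod p), l)) = {(z,a),(z,b),(z,c)} := by
      rintro s a b c rfl
      simp [Finset.image_insert]
    have h1 := himg {i+1,i+2,i} (i+1) (i+2) i rfl
    have h2' := himg {0,1,2} 0 1 2 rfl
    rw [← h1, z3G i, h2']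
    rfl
  refine mem_filter.2 ⟨mem_sdiff.2 ⟨mem_univ _, hz0⟩, (z,i+1), hz1, (z,i+2), hz2, ?_, ?_⟩
  · intro h
    have := congrArg Prod.snd h
    dsimp at this
    exact z3H i this
  · rw [hset]
    exact mem_bose.2 (Or.inl ⟨z, rfl⟩)

end Nbr

section Bounds
variable [Fact p.Prime] (h2 : (2 : ZMod p) ≠ 0) (W : Finset (Pt p))

lemma levset_nbhd_lb (G : Finset (ZMod p)) (i : ZMod 3)
    (hG : ∀ z ∈ G, (z,i) ∈ nbhd univ (bose p) W) :
    G.card ≤ (levset (nbhd univ (bose p) W) i).card :=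
  card_le_card fun z hz => mem_levset.2 (hG z hz)

lemma card_zmod_le (s : Finset (ZMod p)) : s.card ≤ p := by
  have := card_le_univ s
  rwa [ZMod.card] at this

include h2 in
/-- L1: the `T`-bound via Cauchy-Davenport. -/
lemma boundT (i : ZMod 3) :
    min p ((levset W i).card + (levset W (i+1)).card - 1) ≤
      (levset (nbhd univ (bose p) W) i).card + (levset W i).card ∨
    (levset W i) = ∅ ∨ (levset W (i+1)) = ∅ := by
  rcases eq_empty_or_nonempty (levset W i) with h | hA
  · exact Or.inr (Or.inl h)
  rcases eq_empty_or_nonempty (levset W (i+1)) with h | hB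
  · exact Or.inr (Or.inr h)
  left
  have hp : p.Prime := Fact.out
  set A := levset W i
  set B := levset W (i+1)
  set S : Finset (ZMod p) := B.image (fun m => 2*m) + A.image Neg.neg with hS
  have hG : ∀ z ∈ S \ A, (z, i) ∈ nbhd univ (bose p) W := by
    intro z hz
    obtain ⟨hz1, hz2⟩ := mem_sdiff.1 hz
    obtain ⟨u, hu, v, hv, rfl⟩ := Finset.mem_add.1 hz1
    obtain ⟨m, hm, rfl⟩ := mem_image.1 hu
    obtain ⟨x, hx, rfl⟩ := mem_image.1 hv
    refine nbr_T h2 W x m _ i (mem_levset.1 hx) (mem_levset.1 hm) (by ring) ?_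
    exact fun h => hz2 (mem_levset.2 h)
  have hcd : min p ((B.image (fun m => 2*m)).card + (A.image Neg.neg).card - 1) ≤ S.card :=
    ZMod.cauchy_davenport hp (hB.image _) (hA.image _)
  rw [card_image_of_injective _ (fun u v h => two_inj h2 h),
    card_image_of_injective _ neg_injective] at hcd
  have hsplit : S.card ≤ (S \ A).card + A.card := card_le_card_sdiff_add_card
  have hlb := levset_nbhd_lb W (S \ A) i hG
  omega

include h2 in
/-- L2: the midpoint bound. -/
lemma boundM (i : ZMod 3) :
    min p (2 * (levset W (i+2)).card - 1) ≤
      (levset (nbhd univ (bose p) W) i).card + (levset W (i+2)).card + (levset W i).card ∨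
    (levset W (i+2)) = ∅ := by
  rcases eq_empty_or_nonempty (levset W (i+2)) with h | hC
  · exact Or.inr h
  left
  have hp : p.Prime := Fact.out
  set C := levset W (i+2)
  set H : Finset (ZMod p) := (C + C).image (fun z => (2 : ZMod p)⁻¹ * z) with hH
  have hG : ∀ z ∈ H \ (C ∪ levset W i), (z, i) ∈ nbhd univ (bose p) W := by
    intro z hz
    obtain ⟨hz1, hz2⟩ := mem_sdiff.1 hz
    rw [mem_union, not_or] at hz2
    obtain ⟨hzC, hzA⟩ := hz2
    obtain ⟨u, hu, rfl⟩ := mem_image.1 hz1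
    obtain ⟨x, hx, y, hy, rfl⟩ := Finset.mem_add.1 hu
    have hxy : x ≠ y := by
      rintro rfl
      apply hzC
      rw [show (2 : ZMod p)⁻¹ * (x + x) = x from by
        rw [← two_mul, half_two_mul h2]]
      exact hx
    exact nbr_M W x y _ i (mem_levset.1 hx) (mem_levset.1 hy) hxy rfl
      (fun h => hzA (mem_levset.2 h))
  have hcd : min p (C.card + C.card - 1) ≤ (C + C).card := ZMod.cauchy_davenport hp hC hC
  have hHcard : (C + C).card = H.card :=
    (card_image_of_injective _ (fun u v h => by
      have := congrArg (fun t => (2 : ZMod p) * t) h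
      rwa [← mul_assoc, ← mul_assoc, mul_inv_cancel₀ h2, one_mul, one_mul] at this)).symm
  have hsplit : H.card ≤ (H \ (C ∪ levset W i)).card + (C ∪ levset W i).card :=
    card_le_card_sdiff_add_card
  have huni : (C ∪ levset W i).card ≤ C.card + (levset W i).card := card_union_le _ _
  have hlb := levset_nbhd_lb W (H \ (C ∪ levset W i)) i hG
  omega

include h2 in
/-- L3: midpoint ∪ vertical bound. -/
lemma boundMW (i : ZMod 3) :
    min p (2 * (levset W (i+2)).card - 1) + (levset W (i+1)).card ≤
      (levset (nbhd univ (bose p) W) i).card + (levset W i).card + p ∨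
    (levset W (i+2)) = ∅ := by
  rcases eq_empty_or_nonempty (levset W (i+2)) with h | hC
  · exact Or.inr h
  left
  have hp : p.Prime := Fact.out
  set A := levset W i
  set B := levset W (i+1)
  set C := levset W (i+2)
  set H : Finset (ZMod p) := (C + C).image (fun z => (2 : ZMod p)⁻¹ * z) with hH
  set G : Finset (ZMod p) := (H ∪ B ∩ C) \ (A ∪ (C \ B)) with hGdef
  have hG : ∀ z ∈ G, (z, i) ∈ nbhd univ (bose p) W := by
    intro z hz
    obtain ⟨hz1, hz2⟩ := mem_sdiff.1 hz
    rw [mem_union, not_or] at hz2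
    obtain ⟨hzA, hzCB⟩ := hz2
    have hzA' : (z, i) ∉ W := fun h => hzA (mem_levset.2 h)
    have hvert : z ∈ B → z ∈ C → (z, i) ∈ nbhd univ (bose p) W := by
      intro hB hC'
      exact nbr_W W z i (mem_levset.1 hB) (mem_levset.1 hC') hzA'
    rcases mem_union.1 hz1 with hzH | hzBC
    · obtain ⟨u, hu, rfl⟩ := mem_image.1 hzH
      obtain ⟨x, hx, y, hy, rfl⟩ := Finset.mem_add.1 hu
      by_cases hmemC : (2 : ZMod p)⁻¹ * (x + y) ∈ C
      · have hmemB : (2 : ZMod p)⁻¹ * (x + y) ∈ B := by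
          by_contra hnB
          exact hzCB (mem_sdiff.2 ⟨hmemC, hnB⟩)
        exact hvert hmemB hmemC
      · have hxy : x ≠ y := by
          rintro rfl
          apply hmemC
          rw [show (2 : ZMod p)⁻¹ * (x + x) = x from by rw [← two_mul, half_two_mul h2]]
          exact hx
        exact nbr_M W x y _ i (mem_levset.1 hx) (mem_levset.1 hy) hxy rfl hzA'
    · exact hvert (mem_inter.1 hzBC).1 (mem_inter.1 hzBC).2
  -- cardinality chain
  have hcd : min p (C.card + C.card - 1) ≤ (C + C).card := ZMod.cauchy_davenport hp hC hC
  have hHcard : (C + C).card = H.card :=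
    (card_image_of_injective _ (fun u v h => by
      have := congrArg (fun t => (2 : ZMod p) * t) h
      rwa [← mul_assoc, ← mul_assoc, mul_inv_cancel₀ h2, one_mul, one_mul] at this)).symm
  have hsplit : (H ∪ B ∩ C).card ≤ G.card + (A ∪ (C \ B)).card := card_le_card_sdiff_add_card
  have hH_le : H.card ≤ (H ∪ B ∩ C).card := card_le_card subset_union_left
  have huni : (A ∪ (C \ B)).card ≤ A.card + (C \ B).card := card_union_le _ _
  have hCB : (C \ B).card ≤ p - B.card := by
    have hsub : C \ B ⊆ univ \ B := sdiff_subset_sdiff (subset_univ _) le_rfl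
    have := card_le_card hsub
    rwa [card_sdiff_of_subset (subset_univ _), card_univ, ZMod.card] at this
  have hBp : B.card ≤ p := card_zmod_le B
  have hlb := levset_nbhd_lb W G i hG
  omega

include h2 in
/-- L4: full level via saturated T. -/
lemma boundFT (i : ZMod 3)
    (hsat : p + 2 ≤ (levset W i).card + (levset W (i+1)).card) :
    p ≤ (levset (nbhd univ (bose p) W) i).card + (levset W i).card := by
  set A := levset W i
  set B := levset W (i+1)
  have hG : ∀ z ∈ (univ \ A), (z, i) ∈ nbhd univ (bose p) W := by
    intro z hz
    have hzA : z ∉ A := (mem_sdiff.1 hz).2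
    set D : Finset (ZMod p) := B.image (fun m => 2*m - z) with hD
    have hDcard : D.card = B.card := card_image_of_injective _ (fun u v h => by
      have h' : 2*u = 2*v := by
        have := congrArg (fun t => t + z) h
        rwa [sub_add_cancel, sub_add_cancel] at this
      exact two_inj h2 h')
    have hinter : 0 < (D ∩ A).card := by
      have h1 : (D ∩ A).card + (D ∪ A).card = D.card + A.card := card_inter_add_card_union _ _
      have h2' : (D ∪ A).card ≤ p := card_zmod_le _
      omega
    obtain ⟨x, hx⟩ := card_pos.1 hinter
    obtain ⟨hxD, hxA⟩ := mem_inter.1 hx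
    obtain ⟨m, hm, hxm⟩ := mem_image.1 hxD
    refine nbr_T h2 W x m z i (mem_levset.1 hxA) (mem_levset.1 hm) ?_
      (fun h => hzA (mem_levset.2 h))
    rw [← hxm]; ring
  have hlb := levset_nbhd_lb W (univ \ A) i hG
  rw [card_sdiff_of_subset (subset_univ _), card_univ, ZMod.card] at hlb
  have := card_zmod_le A
  omega

include h2 in
/-- L5: full level via saturated midpoints. -/
lemma boundFM (i : ZMod 3)
    (hsat : p + 2 ≤ 2 * (levset W (i+2)).card) :
    p ≤ (levset (nbhd univ (bose p) W) i).card + (levset W i).card := by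
  set A := levset W i
  set C := levset W (i+2)
  have hG : ∀ z ∈ (univ \ A), (z, i) ∈ nbhd univ (bose p) W := by
    intro z hz
    have hzA : z ∉ A := (mem_sdiff.1 hz).2
    set C₁ : Finset (ZMod p) := C.image (fun u => u - z) with hC1
    set C₂ : Finset (ZMod p) := C.image (fun u => z - u) with hC2
    have hc1 : C₁.card = C.card := card_image_of_injective _ (sub_left_injective)
    have hc2 : C₂.card = C.card := card_image_of_injective _ (fun u v h => by
      have := congrArg (fun t => z - t) h
      rwa [sub_sub_cancel, sub_sub_cancel] at this)
    have hinter : 1 < (C₁ ∩ C₂).card := by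
      have h1 : (C₁ ∩ C₂).card + (C₁ ∪ C₂).card = C₁.card + C₂.card :=
        card_inter_add_card_union _ _
      have h2' : (C₁ ∪ C₂).card ≤ p := card_zmod_le _
      omega
    obtain ⟨d, hd, hd0⟩ := exists_mem_ne hinter 0
    obtain ⟨hd1, hd2⟩ := mem_inter.1 hd
    obtain ⟨u, hu, hud⟩ := mem_image.1 hd1
    obtain ⟨v, hv, hvd⟩ := mem_image.1 hd2
    have hxz : u = z + d := by rw [← hud]; ring
    have hyz : v = z - d := by rw [← hvd]; ring
    have hxy : u ≠ v := by
      rw [hxz, hyz]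
      intro h
      apply hd0
      have h2d : 2*d = 2*0 := by linear_combination h
      exact two_inj h2 h2d
    have hzm : z = (2 : ZMod p)⁻¹ * (u + v) := by
      rw [hxz, hyz, show z + d + (z - d) = 2*z from by ring, half_two_mul h2]
    exact nbr_M W u v z i (mem_levset.1 hu) (mem_levset.1 hv) hxy hzm
      (fun h => hzA (mem_levset.2 h))
  have hlb := levset_nbhd_lb W (univ \ A) i hG
  rw [card_sdiff_of_subset (subset_univ _), card_univ, ZMod.card] at hlb
  have := card_zmod_le A
  omega

end Bounds

lemma redT (p x y n : ℕ) (h : min p (x + y - 1) ≤ n + x ∨ x = 0 ∨ y = 0) :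
    1 ≤ x → 1 ≤ y → x + y ≤ p + 1 → y ≤ n + 1 := by omega

lemma redM (p c a n : ℕ) (h : min p (2*c - 1) ≤ n + c + a ∨ c = 0) :
    1 ≤ c → 2*c ≤ p + 1 → c ≤ n + 1 + a := by omega

lemma redMW (p c b a n : ℕ) (h : min p (2*c - 1) + b ≤ n + a + p ∨ c = 0) :
    1 ≤ c → 2*c ≤ p + 1 → 2*c + b ≤ n + 1 + a + p := by omega

set_option maxHeartbeats 8000000 in
theorem bose_expansion [Fact p.Prime] (h2 : (2 : ZMod p) ≠ 0) (W : Finset (Pt p))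
    (hcard : 2 * W.card ≤ 3 * p) :
    (W.card : ℤ) - 3 ≤ ((nbhd univ (bose p) W).card : ℤ) := by
  have e01 : (0 : ZMod 3) + 1 = 1 := by decide
  have e02 : (0 : ZMod 3) + 2 = 2 := by decide
  have e11 : (1 : ZMod 3) + 1 = 2 := by decide
  have e12 : (1 : ZMod 3) + 2 = 0 := by decide
  have e21 : (2 : ZMod 3) + 1 = 0 := by decide
  have e22 : (2 : ZMod 3) + 2 = 1 := by decide
  have hW := card_levset_sum W
  have hNs := card_levset_sum (nbhd univ (bose p) W)
  have hemp : ∀ (s : Finset (ZMod p)), s = ∅ → s.card = 0 := fun s h => by rw [h, card_empty]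
  have cvt : ∀ (P : Prop) (s t : Finset (ZMod p)), (P ∨ s = ∅ ∨ t = ∅) →
      (P ∨ s.card = 0 ∨ t.card = 0) := by
    rintro P s t (h|h|h)
    exacts [Or.inl h, Or.inr (Or.inl (hemp _ h)), Or.inr (Or.inr (hemp _ h))]
  have cvt1 : ∀ (P : Prop) (s : Finset (ZMod p)), (P ∨ s = ∅) → (P ∨ s.card = 0) := by
    rintro P s (h|h)
    exacts [Or.inl h, Or.inr (hemp _ h)]
  have hT0 := redT _ _ _ _ (cvt _ _ _ (by have := boundT h2 W 0; rwa [e01] at this))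
  have hT1 := redT _ _ _ _ (cvt _ _ _ (by have := boundT h2 W 1; rwa [e11] at this))
  have hT2 := redT _ _ _ _ (cvt _ _ _ (by have := boundT h2 W 2; rwa [e21] at this))
  have hM0 := redM _ _ _ _ (cvt1 _ _ (by have := boundM h2 W 0; rwa [e02] at this))
  have hM1 := redM _ _ _ _ (cvt1 _ _ (by have := boundM h2 W 1; rwa [e12] at this))
  have hM2 := redM _ _ _ _ (cvt1 _ _ (by have := boundM h2 W 2; rwa [e22] at this))
  have hMW0 := redMW _ _ _ _ _ (cvt1 _ _ (by have := boundMW h2 W 0; rwa [e01, e02] at this))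
  have hMW1 := redMW _ _ _ _ _ (cvt1 _ _ (by have := boundMW h2 W 1; rwa [e11, e12] at this))
  have hMW2 := redMW _ _ _ _ _ (cvt1 _ _ (by have := boundMW h2 W 2; rwa [e21, e22] at this))
  have hFT0 := boundFT h2 W 0; rw [e01] at hFT0
  have hFT1 := boundFT h2 W 1; rw [e11] at hFT1
  have hFT2 := boundFT h2 W 2; rw [e21] at hFT2
  have hFM0 := boundFM h2 W 0; rw [e02] at hFM0
  have hFM1 := boundFM h2 W 1; rw [e12] at hFM1
  have hFM2 := boundFM h2 W 2; rw [e22] at hFM2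
  have hp0 := card_zmod_le (levset W 0)
  have hp1 := card_zmod_le (levset W 1)
  have hp2 := card_zmod_le (levset W 2)
  omega

def embPt (p : ℕ) [NeZero p] : Pt p ↪ ℕ :=
  ⟨fun a => a.1.val * 3 + a.2.val, by
    rintro ⟨x, i⟩ ⟨y, j⟩ h
    dsimp at h
    have hi : i.val < 3 := ZMod.val_lt i
    have hj : j.val < 3 := ZMod.val_lt j
    have h1 : x.val = y.val ∧ i.val = j.val := by omega
    exact Prod.ext (ZMod.val_injective p h1.1) (ZMod.val_injective 3 h1.2)⟩

/-- For every odd prime `p` there exists a Steiner triple system `S` on a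
`3p`-element vertex set `V` such that for every `V' ⊆ V` with `2|V'| ≤ |V|`,
`|N(V')| ≥ |V'| - 3`. -/
theorem statement_0 (p : ℕ) (hp : p.Prime) (hodd : Odd p) :
    ∃ (V : Finset ℕ) (S : Finset (Finset ℕ)),
      V.card = 3 * p ∧ IsSTS V S ∧
      ∀ V' ⊆ V, 2 * V'.card ≤ V.card →
        (V'.card : ℤ) - 3 ≤ ((nbhd V S V').card : ℤ) := by
  haveI : Fact p.Prime := ⟨hp⟩
  haveI : NeZero p := ⟨hp.pos.ne'⟩
  have hpne2 : p ≠ 2 := by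
    intro h
    rw [h] at hodd
    exact (Nat.not_odd_iff_even.2 (by decide)) hodd
  have h2 : (2 : ZMod p) ≠ 0 := by
    intro h
    have : ((2 : ℕ) : ZMod p) = 0 := by exact_mod_cast h
    rw [ZMod.natCast_eq_zero_iff] at this
    exact hpne2 ((Nat.prime_dvd_prime_iff_eq hp Nat.prime_two).1 this)
  set e := embPt p with he
  set F : Finset (Pt p) ↪ Finset ℕ := ⟨Finset.map e, Finset.map_injective e⟩ with hF
  have hV3 : ((univ : Finset (Pt p)).map e).card = 3 * p := by
    rw [card_map, card_univ, Fintype.card_prod, ZMod.card, ZMod.card]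
    exact mul_comm p 3
  refine ⟨(univ : Finset (Pt p)).map e, (bose p).map F, hV3, ?_, ?_⟩
  · obtain ⟨hSTS1, hSTS2⟩ := bose_isSTS h2
    constructor
    · intro T' hT'
      obtain ⟨T, hT, rfl⟩ := mem_map.1 hT'
      obtain ⟨-, hc⟩ := hSTS1 T hT
      exact ⟨map_subset_map.2 (subset_univ T), by rw [Function.Embedding.coeFn_mk, card_map, hc]⟩
    · intro x hx y hy hxy
      obtain ⟨u, -, rfl⟩ := mem_map.1 hx
      obtain ⟨v, -, rfl⟩ := mem_map.1 hy
      have huv : u ≠ v := fun h => hxy (by rw [h])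
      have hfe : ((bose p).map F).filter (fun T => e u ∈ T ∧ e v ∈ T) =
          ((bose p).filter (fun T => u ∈ T ∧ v ∈ T)).map F := by
        ext T'
        simp only [mem_filter, mem_map, hF, Function.Embedding.coeFn_mk]
        constructor
        · rintro ⟨⟨T, hT, rfl⟩, hu, hv⟩
          exact ⟨T, ⟨hT, (Finset.mem_map' e).1 hu, (Finset.mem_map' e).1 hv⟩, rfl⟩
        · rintro ⟨T, ⟨hT, hu, hv⟩, rfl⟩
          exact ⟨⟨T, hT, rfl⟩, (Finset.mem_map' e).2 hu, (Finset.mem_map' e).2 hv⟩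
      rw [hfe, card_map]
      exact bose_pair_card h2 huv
  · intro V' hsub hcard
    set W : Finset (Pt p) := univ.filter (fun w => e w ∈ V') with hW
    have hV' : V' = W.map e := by
      ext z
      constructor
      · intro hz
        obtain ⟨w, -, rfl⟩ := mem_map.1 (hsub hz)
        exact (Finset.mem_map' e).2 (mem_filter.2 ⟨mem_univ _, hz⟩)
      · intro hz
        obtain ⟨w, hw, rfl⟩ := mem_map.1 hz
        exact (mem_filter.1 hw).2
    have hsetmap : ∀ (ux uy w : Pt p),
        ({e ux, e uy, e w} : Finset ℕ) = ({ux, uy, w} : Finset (Pt p)).map e := by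
      intro ux uy w
      rw [Finset.map_insert, Finset.map_insert, Finset.map_singleton]
    have hnb : nbhd ((univ : Finset (Pt p)).map e) ((bose p).map F) (W.map e) =
        (nbhd univ (bose p) W).map e := by
      ext z'
      simp only [nbhd, mem_filter, mem_sdiff, mem_map, hF, Function.Embedding.coeFn_mk]
      constructor
      · rintro ⟨⟨⟨w, -, rfl⟩, hzW⟩, x, hx, y, hy, hxy, htrip⟩
        obtain ⟨ux, hux, rfl⟩ := hx
        obtain ⟨uy, huy, rfl⟩ := hy
        have huxy : ux ≠ uy := fun h => hxy (by rw [h])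
        rw [hsetmap ux uy w] at htrip
        obtain ⟨T, hT, hTeq⟩ := htrip
        have hTT : T = ({ux, uy, w} : Finset (Pt p)) := Finset.map_injective e hTeq
        have hw2 : w ∉ W := fun h => hzW ⟨w, h, rfl⟩
        exact ⟨w, ⟨⟨mem_univ _, hw2⟩, ux, hux, uy, huy, huxy, hTT ▸ hT⟩, rfl⟩
      · rintro ⟨w, ⟨⟨-, hw2⟩, ux, hux, uy, huy, huxy, htrip⟩, rfl⟩
        refine ⟨⟨⟨w, mem_univ _, rfl⟩, ?_⟩,
          e ux, ⟨ux, hux, rfl⟩, e uy, ⟨uy, huy, rfl⟩,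
          fun h => huxy (e.injective h), ?_⟩
        · rintro ⟨a, ha, hae⟩
          exact hw2 (e.injective hae ▸ ha)
        · rw [hsetmap ux uy w]
          exact ⟨{ux, uy, w}, htrip, rfl⟩
    rw [hV', hnb, card_map, card_map]
    apply bose_expansion h2
    rw [hV3] at hcard
    rw [hV', card_map] at hcard
    exact hcard
end

section
/- There exists n₀ such that for every n ≥ n₀, every spreading linear triple system F on an n-element set V satisfies |F| > 0.1103·n². -/
open Finset

variable {α : Type*}

/-! ### Auxiliary machinery for the lower bound -/

section SpreadAux

variable {β : Type*} [DecidableEq β] {V : Finset β} {F : Finset (Finset β)}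

lemma covered_symm {x y : β} (h : Covered F x y) : Covered F y x := by
  obtain ⟨T, hT, hx, hy⟩ := h
  exact ⟨T, hT, hy, hx⟩

/-- `Bset V F u` is the set of vertices of `V` distinct from `u` and uncovered with `u`. -/
def Bset (V : Finset β) (F : Finset (Finset β)) (u : β) : Finset β :=
  V.filter fun w => w ≠ u ∧ ¬ Covered F u w

lemma mem_Bset {u w : β} : w ∈ Bset V F u ↔ w ∈ V ∧ w ≠ u ∧ ¬ Covered F u w := by
  simp [Bset]

lemma Bset_subset (u : β) : Bset V F u ⊆ V := filter_subset _ _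

/-- No three vertices of `V` are pairwise uncovered (the complement is triangle-free). -/
lemma no_H_triangle (hS : IsSpreading V F) (hn : 5 ≤ V.card)
    {a b c : β} (ha : a ∈ V) (hb : b ∈ V) (hc : c ∈ V)
    (hab : a ≠ b) (hac : a ≠ c) (hbc : b ≠ c)
    (nab : ¬Covered F a b) (nac : ¬Covered F a c) (nbc : ¬Covered F b c) : False := by
  have hsub : ({a, b, c} : Finset β) ⊆ V := by
    intro x hx
    simp only [mem_insert, mem_singleton] at hx
    rcases hx with rfl | rfl | rfl <;> assumption
  have hcard : ({a, b, c} : Finset β).card = 3 := by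
    rw [card_insert_of_notMem (by simp [hab, hac]), card_insert_of_notMem (by simp [hbc]),
      card_singleton]
  have hnotF : ({a, b, c} : Finset β) ∉ F := fun h => nab ⟨{a, b, c}, h, by simp, by simp⟩
  have hnbhd : nbhd V F {a, b, c} = ∅ := by
    rw [nbhd, Finset.filter_eq_empty_iff]
    rintro z hz ⟨x, hx, y, hy, hxy, hT⟩
    have hcov : Covered F x y := ⟨{x, y, z}, hT, by simp, by simp⟩
    simp only [mem_insert, mem_singleton] at hx hy
    rcases hx with rfl | rfl | rfl <;> rcases hy with rfl | rfl | rfl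
    · exact hxy rfl
    · exact nab hcov
    · exact nac hcov
    · exact nab (covered_symm hcov)
    · exact hxy rfl
    · exact nbc hcov
    · exact nac (covered_symm hcov)
    · exact nbc (covered_symm hcov)
    · exact hxy rfl
  have hVeq := hS {a, b, c} hsub (by omega) hnotF {a, b, c} Subset.rfl hsub hnbhd
  rw [← hVeq, hcard] at hn
  omega

/-- No vertex of `V` is uncovered with all three vertices of a triple. -/
lemma no_T4 (hL : IsLinearTS V F) (hS : IsSpreading V F) (hn : 5 ≤ V.card)
    {u : β} (hu : u ∈ V) {T : Finset β} (hT : T ∈ F) (huT : u ∉ T)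
    (hunc : ∀ t ∈ T, ¬Covered F u t) : False := by
  have hTV : T ⊆ V := (hL.1 T hT).1
  have hT3 : T.card = 3 := (hL.1 T hT).2
  set W : Finset β := insert u T with hW
  have hWV : W ⊆ V := insert_subset hu hTV
  have hWcard : W.card = 4 := by rw [hW, card_insert_of_notMem huT, hT3]
  have hWnotF : W ∉ F := by
    intro h
    have := (hL.1 W h).2
    omega
  have hnbhd : nbhd V F W = ∅ := by
    rw [nbhd, Finset.filter_eq_empty_iff]
    rintro z hz ⟨x, hx, y, hy, hxy, hTz⟩
    have hzW : z ∉ W := (mem_sdiff.mp hz).2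
    have hcov : Covered F x y := ⟨{x, y, z}, hTz, by simp, by simp⟩
    rw [hW, mem_insert] at hx hy
    rcases hx with rfl | hxT
    · rcases hy with rfl | hyT
      · exact hxy rfl
      · exact hunc y hyT hcov
    · rcases hy with rfl | hyT
      · exact hunc x hxT (covered_symm hcov)
      · -- x, y ∈ T : by linearity {x,y,z} = T, so z ∈ T ⊆ W, contradiction
        have hxV : x ∈ V := hTV hxT
        have hyV : y ∈ V := hTV hyT
        have h1 := hL.2 x hxV y hyV hxy
        have hmemT : T ∈ F.filter fun T' => x ∈ T' ∧ y ∈ T' :=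
          mem_filter.mpr ⟨hT, hxT, hyT⟩
        have hmemT' : ({x, y, z} : Finset β) ∈ F.filter fun T' => x ∈ T' ∧ y ∈ T' :=
          mem_filter.mpr ⟨hTz, by simp, by simp⟩
        have hEq : T = ({x, y, z} : Finset β) :=
          Finset.card_le_one.mp h1 T hmemT _ hmemT'
        have hzT : z ∈ T := by rw [hEq]; simp
        exact hzW (mem_insert_of_mem hzT)
  have hVeq := hS W hWV (by omega) hWnotF W Subset.rfl hWV hnbhd
  rw [← hVeq, hWcard] at hn
  omega

/-- Any two distinct vertices of `Bset V F u` are covered. -/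
lemma covered_of_B (hS : IsSpreading V F) (hn : 5 ≤ V.card) {u w w' : β} (hu : u ∈ V)
    (hw : w ∈ Bset V F u) (hw' : w' ∈ Bset V F u) (hne : w ≠ w') : Covered F w w' := by
  by_contra hnc
  obtain ⟨hwV, hwu, hcw⟩ := mem_Bset.mp hw
  obtain ⟨hw'V, hw'u, hcw'⟩ := mem_Bset.mp hw'
  exact no_H_triangle hS hn hu hwV hw'V (Ne.symm hwu) (Ne.symm hw'u) hne hcw hcw' hnc

/-- No triple is contained in `Bset V F u`. -/
lemma no_triple_in_B (hL : IsLinearTS V F) (hS : IsSpreading V F) (hn : 5 ≤ V.card)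
    {u : β} (hu : u ∈ V) {T : Finset β} (hT : T ∈ F) (hTB : T ⊆ Bset V F u) : False := by
  have huT : u ∉ T := by
    intro h
    exact (mem_Bset.mp (hTB h)).2.1 rfl
  exact no_T4 hL hS hn hu hT huT fun t ht => (mem_Bset.mp (hTB ht)).2.2

/-- Each pair of `Bset V F u` yields its own triple meeting `Bset V F u` in exactly 2 points. -/
lemma choose_two_le (hL : IsLinearTS V F) (hS : IsSpreading V F) (hn : 5 ≤ V.card)
    {u : β} (hu : u ∈ V) :
    (Bset V F u).card.choose 2 ≤ (F.filter fun T => (T ∩ Bset V F u).card = 2).card := by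
  classical
  set B := Bset V F u with hB
  have hex : ∀ p ∈ B.powersetCard 2, ∃ T, T ∈ F ∧ p ⊆ T := by
    intro p hp
    obtain ⟨hpB, hp2⟩ := mem_powersetCard.mp hp
    obtain ⟨w, w', hne, rfl⟩ := card_eq_two.mp hp2
    have hw : w ∈ B := hpB (by simp)
    have hw' : w' ∈ B := hpB (by simp)
    obtain ⟨T, hT, h1, h2⟩ := covered_of_B hS hn hu hw hw' hne
    refine ⟨T, hT, ?_⟩
    intro x hx
    simp only [mem_insert, mem_singleton] at hx
    rcases hx with rfl | rfl <;> assumption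
  set f : Finset β → Finset β := fun p => if h : ∃ T, T ∈ F ∧ p ⊆ T then h.choose else ∅ with hf
  have hmaps : ∀ p ∈ B.powersetCard 2, f p ∈ F.filter fun T => (T ∩ B).card = 2 := by
    intro p hp
    have h := hex p hp
    obtain ⟨hpB, hp2⟩ := mem_powersetCard.mp hp
    have hfp : f p = h.choose := by rw [hf]; exact dif_pos h
    obtain ⟨hTF, hpT⟩ := h.choose_spec
    rw [hfp]
    set T := h.choose with hTdef
    have hcard3 : T.card = 3 := (hL.1 T hTF).2
    have hsub2 : p ⊆ T ∩ B := subset_inter hpT hpB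
    have h2le : 2 ≤ (T ∩ B).card := by
      calc 2 = p.card := hp2.symm
        _ ≤ (T ∩ B).card := card_le_card hsub2
    have hle3 : (T ∩ B).card ≤ 3 := hcard3 ▸ card_le_card inter_subset_left
    have hne3 : (T ∩ B).card ≠ 3 := by
      intro h3
      have hEq : T ∩ B = T :=
        Finset.eq_of_subset_of_card_le inter_subset_left (by omega)
      have hTB : T ⊆ B := by
        intro x hx
        have hx2 : x ∈ T ∩ B := by rw [hEq]; exact hx
        exact (mem_inter.mp hx2).2
      exact no_triple_in_B hL hS hn hu hTF hTB
    exact mem_filter.mpr ⟨hTF, by omega⟩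
  have hinj : Set.InjOn f (B.powersetCard 2 : Finset (Finset β)) := by
    intro p hp q hq hpq
    simp only [Finset.mem_coe] at hp hq
    have hp' := hex p hp
    have hq' := hex q hq
    have hfp : f p = hp'.choose := by rw [hf]; exact dif_pos hp'
    have hfq : f q = hq'.choose := by rw [hf]; exact dif_pos hq'
    obtain ⟨hpB, hp2⟩ := mem_powersetCard.mp hp
    obtain ⟨hqB, hq2⟩ := mem_powersetCard.mp hq
    have hTcard : ((f p) ∩ B).card = 2 := (mem_filter.mp (hmaps p hp)).2
    have hpT : p ⊆ f p ∩ B := subset_inter (hfp ▸ hp'.choose_spec.2) hpB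
    have hqT : q ⊆ f q ∩ B := subset_inter (hfq ▸ hq'.choose_spec.2) hqB
    have hpeq : p = f p ∩ B :=
      Finset.eq_of_subset_of_card_le hpT (by omega)
    have hTcard' : ((f q) ∩ B).card = 2 := (mem_filter.mp (hmaps q hq)).2
    have hqeq : q = f q ∩ B :=
      Finset.eq_of_subset_of_card_le hqT (by omega)
    rw [hpeq, hqeq, hpq]
  calc B.card.choose 2 = (B.powersetCard 2).card := (card_powersetCard 2 B).symm
    _ ≤ (F.filter fun T => (T ∩ B).card = 2).card := card_le_card_of_injOn f hmaps hinj

/-- For an uncovered pair `(u,v)`, the two B-sets are disjoint. -/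
lemma Bset_disjoint (hS : IsSpreading V F) (hn : 5 ≤ V.card)
    {u v : β} (hu : u ∈ V) (hv : v ∈ Bset V F u) :
    Disjoint (Bset V F u) (Bset V F v) := by
  obtain ⟨hvV, hvu, hcuv⟩ := mem_Bset.mp hv
  rw [Finset.disjoint_left]
  intro w hwu hwv
  obtain ⟨hwV, hwu', hcuw⟩ := mem_Bset.mp hwu
  obtain ⟨_, hwv', hcvw⟩ := mem_Bset.mp hwv
  exact no_H_triangle hS hn hu hvV hwV (Ne.symm hvu) (Ne.symm hwu') (Ne.symm hwv') hcuv hcuw hcvw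

/-- The key per-edge counting bound. -/
lemma edge_bound (hL : IsLinearTS V F) (hS : IsSpreading V F) (hn : 5 ≤ V.card)
    {u v : β} (hu : u ∈ V) (hv : v ∈ Bset V F u) :
    (Bset V F u).card.choose 2 + (Bset V F v).card.choose 2 ≤ F.card := by
  classical
  have hvV : v ∈ V := (mem_Bset.mp hv).1
  set Fu := F.filter fun T => (T ∩ Bset V F u).card = 2 with hFu
  set Fv := F.filter fun T => (T ∩ Bset V F v).card = 2 with hFv
  have hdisjB := Bset_disjoint hS hn hu hv
  have hdisj : Disjoint Fu Fv := by
    rw [Finset.disjoint_left]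
    intro T hTu hTv
    obtain ⟨hTF, h2u⟩ := mem_filter.mp hTu
    obtain ⟨_, h2v⟩ := mem_filter.mp hTv
    have hT3 : T.card = 3 := (hL.1 T hTF).2
    have hsub : (T ∩ Bset V F u) ∪ (T ∩ Bset V F v) ⊆ T :=
      union_subset inter_subset_left inter_subset_left
    have hd : Disjoint (T ∩ Bset V F u) (T ∩ Bset V F v) :=
      hdisjB.mono inter_subset_right inter_subset_right
    have := card_le_card hsub
    rw [card_union_of_disjoint hd, h2u, h2v, hT3] at this
    omega
  calc (Bset V F u).card.choose 2 + (Bset V F v).card.choose 2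
      ≤ Fu.card + Fv.card :=
        Nat.add_le_add (choose_two_le hL hS hn hu) (choose_two_le hL hS hn hvV)
    _ = (Fu ∪ Fv).card := (card_union_of_disjoint hdisj).symm
    _ ≤ F.card := card_le_card (union_subset (filter_subset _ _) (filter_subset _ _))

end SpreadAux


section CountAux

variable {β : Type*} [DecidableEq β] {V : Finset β} {F : Finset (Finset β)}

/-- The set of ordered uncovered pairs. -/
def Aunc (V : Finset β) (F : Finset (Finset β)) : Finset (β × β) :=
  V.offDiag.filter fun p => ¬ Covered F p.1 p.2

lemma mem_Aunc {p : β × β} :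
    p ∈ Aunc V F ↔ (p.1 ∈ V ∧ p.2 ∈ V ∧ p.1 ≠ p.2) ∧ ¬ Covered F p.1 p.2 := by
  simp [Aunc, mem_offDiag]

lemma Aunc_fiber_fst {u : β} (hu : u ∈ V) :
    ((Aunc V F).filter fun p => p.1 = u) = (Bset V F u).image fun w => (u, w) := by
  ext q
  obtain ⟨x, y⟩ := q
  simp only [mem_filter, mem_image, mem_Aunc, mem_Bset]
  constructor
  · rintro ⟨⟨⟨hxV, hyV, hne⟩, hnc⟩, rfl⟩
    exact ⟨y, ⟨hyV, Ne.symm hne, hnc⟩, rfl⟩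
  · rintro ⟨w, ⟨hwV, hwu, hnc⟩, heq⟩
    cases heq
    exact ⟨⟨⟨hu, hwV, Ne.symm hwu⟩, hnc⟩, rfl⟩

lemma Aunc_fiber_snd {v : β} (hv : v ∈ V) :
    ((Aunc V F).filter fun p => p.2 = v) = (Bset V F v).image fun w => (w, v) := by
  ext q
  obtain ⟨x, y⟩ := q
  simp only [mem_filter, mem_image, mem_Aunc, mem_Bset]
  constructor
  · rintro ⟨⟨⟨hxV, hyV, hne⟩, hnc⟩, rfl⟩
    exact ⟨x, ⟨hxV, hne, fun hc => hnc (covered_symm hc)⟩, rfl⟩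
  · rintro ⟨w, ⟨hwV, hwv, hnc⟩, heq⟩
    cases heq
    exact ⟨⟨⟨hwV, hv, hwv⟩, fun hc => hnc (covered_symm hc)⟩, rfl⟩

lemma Aunc_maps_fst : ∀ p ∈ Aunc V F, p.1 ∈ V := fun p hp => (mem_Aunc.mp hp).1.1

lemma Aunc_maps_snd : ∀ p ∈ Aunc V F, p.2 ∈ V := fun p hp => (mem_Aunc.mp hp).1.2.1

lemma card_Aunc : (Aunc V F).card = ∑ u ∈ V, (Bset V F u).card := by
  rw [card_eq_sum_card_fiberwise (Aunc_maps_fst (V := V) (F := F))]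
  refine sum_congr rfl fun u hu => ?_
  rw [Aunc_fiber_fst hu, card_image_of_injective _ fun a b h => (Prod.mk.injEq _ _ _ _).mp h |>.2]

lemma sum_fst_Aunc :
    ∑ p ∈ Aunc V F, (Bset V F p.1).card = ∑ u ∈ V, (Bset V F u).card * (Bset V F u).card := by
  rw [← sum_fiberwise_of_maps_to (Aunc_maps_fst (V := V) (F := F))
    (fun p => (Bset V F p.1).card)]
  refine sum_congr rfl fun u hu => ?_
  rw [Aunc_fiber_fst hu, sum_image (fun a _ b _ h => (Prod.mk.injEq _ _ _ _).mp h |>.2)]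
  simp [mul_comm]

lemma sum_snd_Aunc :
    ∑ p ∈ Aunc V F, (Bset V F p.2).card = ∑ u ∈ V, (Bset V F u).card * (Bset V F u).card := by
  rw [← sum_fiberwise_of_maps_to (Aunc_maps_snd (V := V) (F := F))
    (fun p => (Bset V F p.2).card)]
  refine sum_congr rfl fun u hu => ?_
  rw [Aunc_fiber_snd hu, sum_image (fun a _ b _ h => (Prod.mk.injEq _ _ _ _).mp h |>.1)]
  simp [mul_comm]

/-- Global counting: `n(n-1) ≤ 6|F| + S`. -/
lemma global_count (hL : IsLinearTS V F) :
    V.card * V.card ≤ 6 * F.card + (∑ u ∈ V, (Bset V F u).card) + V.card := by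
  classical
  set Acov : Finset (β × β) := V.offDiag.filter fun p => Covered F p.1 p.2 with hAcov
  have hsplit : Acov.card + (Aunc V F).card = V.offDiag.card := by
    rw [hAcov, Aunc]
    exact card_filter_add_card_filter_not _
  have hoff : V.offDiag.card = V.card * V.card - V.card := by rw [offDiag_card]
  -- bound Acov.card ≤ 6 * F.card
  set g : β × β → Finset β := fun p => if h : Covered F p.1 p.2 then h.choose else ∅ with hg
  have hmaps : ∀ p ∈ Acov, g p ∈ F := by
    intro p hp
    have hc : Covered F p.1 p.2 := (mem_filter.mp hp).2
    have : g p = hc.choose := by rw [hg]; exact dif_pos hc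
    rw [this]
    exact hc.choose_spec.1
  have hcov_card : Acov.card ≤ 6 * F.card := by
    rw [card_eq_sum_card_fiberwise hmaps]
    have hbound : ∀ T ∈ F, (Acov.filter fun p => g p = T).card ≤ 6 := by
      intro T hT
      have hsub : (Acov.filter fun p => g p = T) ⊆ T.offDiag := by
        intro p hp
        obtain ⟨hpA, hgp⟩ := mem_filter.mp hp
        obtain ⟨hpoff, hc⟩ := mem_filter.mp hpA
        have hgp' : g p = hc.choose := by rw [hg]; exact dif_pos hc
        have hspec := hc.choose_spec
        rw [hgp'] at hgp
        rw [mem_offDiag]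
        exact ⟨hgp ▸ hspec.2.1, hgp ▸ hspec.2.2, (mem_offDiag.mp hpoff).2.2⟩
      have hTcard : T.offDiag.card = 6 := by
        rw [offDiag_card, (hL.1 T hT).2]
      calc (Acov.filter fun p => g p = T).card ≤ T.offDiag.card := card_le_card hsub
        _ = 6 := hTcard
    calc ∑ T ∈ F, (Acov.filter fun p => g p = T).card ≤ ∑ T ∈ F, 6 := sum_le_sum hbound
      _ = 6 * F.card := by rw [sum_const, smul_eq_mul, mul_comm]
  have h1 : V.card * V.card - V.card ≤ 6 * F.card + (∑ u ∈ V, (Bset V F u).card) := by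
    rw [← hoff, ← hsplit, ← card_Aunc (V := V) (F := F)]
    exact Nat.add_le_add hcov_card le_rfl
  exact Nat.sub_le_iff_le_add.mp h1

/-- Averaging: there is an uncovered pair with large B-sets. -/
lemma exists_good_edge (hSpos : 1 ≤ ∑ u ∈ V, (Bset V F u).card) :
    ∃ u ∈ V, ∃ v ∈ Bset V F u,
      2 * (∑ w ∈ V, (Bset V F w).card) ≤ V.card * ((Bset V F u).card + (Bset V F v).card) := by
  classical
  by_contra hcon
  push_neg at hcon
  have hmem : ∀ p ∈ Aunc V F, p.1 ∈ V ∧ p.2 ∈ Bset V F p.1 := by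
    intro p hp
    obtain ⟨⟨h1, h2, h3⟩, h4⟩ := mem_Aunc.mp hp
    exact ⟨h1, mem_Bset.mpr ⟨h2, Ne.symm h3, h4⟩⟩
  have hsum : ∑ p ∈ Aunc V F,
      (V.card * ((Bset V F p.1).card + (Bset V F p.2).card) + 1)
        ≤ ∑ _p ∈ Aunc V F, 2 * (∑ w ∈ V, (Bset V F w).card) := by
    refine sum_le_sum fun p hp => ?_
    obtain ⟨h1, h2⟩ := hmem p hp
    exact Nat.succ_le_of_lt (hcon p.1 h1 p.2 h2)
  have hLHS : ∑ p ∈ Aunc V F,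
      (V.card * ((Bset V F p.1).card + (Bset V F p.2).card) + 1)
      = V.card * ((∑ u ∈ V, (Bset V F u).card * (Bset V F u).card)
          + (∑ u ∈ V, (Bset V F u).card * (Bset V F u).card))
        + (∑ u ∈ V, (Bset V F u).card) := by
    rw [sum_add_distrib, sum_const, smul_eq_mul, mul_one, card_Aunc, ← mul_sum]
    congr 1
    rw [sum_add_distrib, sum_fst_Aunc, sum_snd_Aunc]
  have hRHS : ∑ _p ∈ Aunc V F, 2 * (∑ w ∈ V, (Bset V F w).card)
      = (∑ u ∈ V, (Bset V F u).card) * (2 * (∑ w ∈ V, (Bset V F w).card)) := by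
    rw [sum_const, smul_eq_mul, card_Aunc]
  rw [hLHS, hRHS] at hsum
  -- Cauchy-Schwarz over ℤ
  have hCS : ((∑ u ∈ V, (Bset V F u).card : ℕ) : ℤ) ^ 2
      ≤ (V.card : ℤ) * ((∑ u ∈ V, (Bset V F u).card * (Bset V F u).card : ℕ) : ℤ) := by
    have h := sq_sum_le_card_mul_sum_sq (s := V) (f := fun u => ((Bset V F u).card : ℤ))
    have e1 : (∑ u ∈ V, ((Bset V F u).card : ℤ))
        = ((∑ u ∈ V, (Bset V F u).card : ℕ) : ℤ) := by push_cast; ring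
    have e2 : (∑ u ∈ V, ((Bset V F u).card : ℤ) ^ 2)
        = ((∑ u ∈ V, (Bset V F u).card * (Bset V F u).card : ℕ) : ℤ) := by
      push_cast
      exact sum_congr rfl fun u _ => by ring
    rw [e1, e2] at h
    exact h
  have hsumZ : (V.card : ℤ) * (((∑ u ∈ V, (Bset V F u).card * (Bset V F u).card : ℕ) : ℤ)
        + ((∑ u ∈ V, (Bset V F u).card * (Bset V F u).card : ℕ) : ℤ))
        + ((∑ u ∈ V, (Bset V F u).card : ℕ) : ℤ)
      ≤ ((∑ u ∈ V, (Bset V F u).card : ℕ) : ℤ)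
        * (2 * ((∑ u ∈ V, (Bset V F u).card : ℕ) : ℤ)) := by exact_mod_cast hsum
  have hSposZ : (1 : ℤ) ≤ ((∑ u ∈ V, (Bset V F u).card : ℕ) : ℤ) := by exact_mod_cast hSpos
  nlinarith [hCS, hsumZ, hSposZ]

end CountAux

/-- There exists `n₀` such that for every `n ≥ n₀`, every spreading
linear triple system on an `n`-element set has more than `0.1103 n²` triples. -/
theorem statement_2 :
    ∃ n₀ : ℕ, ∀ (β : Type) (_ : DecidableEq β) (V : Finset β) (F : Finset (Finset β)),
      n₀ ≤ V.card → IsLinearTS V F → IsSpreading V F →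
      (0.1103 : ℝ) * (V.card : ℝ) ^ 2 < (F.card : ℝ) := by
  refine ⟨1000000, ?_⟩
  intro β inst V F hn hL hS
  letI := inst
  have hn5 : 5 ≤ V.card := le_trans (by norm_num) hn
  have hglob := global_count (V := V) (F := F) hL
  have hnR : (1000000 : ℝ) ≤ (V.card : ℝ) := by exact_mod_cast hn
  by_cases hcase : 200 * (∑ u ∈ V, (Bset V F u).card) ≤ 67 * (V.card * V.card)
  · -- sparse uncovered graph: direct count
    have hR1 : ((V.card : ℝ)) * V.card
        ≤ 6 * (F.card : ℝ) + ((∑ u ∈ V, (Bset V F u).card : ℕ) : ℝ) + V.card := by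
      exact_mod_cast hglob
    have hR2 : 200 * ((∑ u ∈ V, (Bset V F u).card : ℕ) : ℝ)
        ≤ 67 * ((V.card : ℝ) * V.card) := by exact_mod_cast hcase
    nlinarith [hR1, hR2, hnR, sq_nonneg ((V.card : ℝ))]
  · -- dense uncovered graph: use the big disjoint cliques
    have hlt : 67 * (V.card * V.card) < 200 * (∑ u ∈ V, (Bset V F u).card) :=
      Nat.lt_of_not_le hcase
    have hSpos : 1 ≤ ∑ u ∈ V, (Bset V F u).card := by
      rcases Nat.eq_zero_or_pos (∑ u ∈ V, (Bset V F u).card) with h0 | h1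
      · rw [h0] at hlt; omega
      · exact h1
    obtain ⟨u, hu, v, hv, havg⟩ := exists_good_edge (V := V) (F := F) hSpos
    have hedge := edge_bound hL hS hn5 hu hv
    have haN : (Bset V F u).card ≤ V.card := card_le_card (Bset_subset u)
    have hbN : (Bset V F v).card ≤ V.card := card_le_card (Bset_subset v)
    -- move to ℝ
    set a : ℝ := ((Bset V F u).card : ℝ) with hadef
    set b : ℝ := ((Bset V F v).card : ℝ) with hbdef
    have ha0 : 0 ≤ a := by rw [hadef]; positivity
    have hb0 : 0 ≤ b := by rw [hbdef]; positivity
    have haR : a ≤ (V.card : ℝ) := by rw [hadef]; exact_mod_cast haN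
    have hbR : b ≤ (V.card : ℝ) := by rw [hbdef]; exact_mod_cast hbN
    have hedgeR : a * (a - 1) / 2 + b * (b - 1) / 2 ≤ (F.card : ℝ) := by
      have h := hedge
      have hc : (((Bset V F u).card.choose 2 : ℕ) : ℝ)
          + (((Bset V F v).card.choose 2 : ℕ) : ℝ) ≤ (F.card : ℝ) := by exact_mod_cast h
      rwa [Nat.cast_choose_two, Nat.cast_choose_two, ← hadef, ← hbdef] at hc
    have havgR : 2 * ((∑ w ∈ V, (Bset V F w).card : ℕ) : ℝ) ≤ (V.card : ℝ) * (a + b) := by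
      rw [hadef, hbdef]; exact_mod_cast havg
    have hltR : 67 * ((V.card : ℝ) * V.card) < 200 * ((∑ u ∈ V, (Bset V F u).card : ℕ) : ℝ) := by
      exact_mod_cast hlt
    have hnpos : (0 : ℝ) < (V.card : ℝ) := by linarith
    have h67 : 67 * (V.card : ℝ) < 100 * (a + b) := by
      have hx : (V.card : ℝ) * (67 * (V.card : ℝ)) < (V.card : ℝ) * (100 * (a + b)) := by
        nlinarith [hltR, havgR]
      exact (mul_lt_mul_iff_right₀ hnpos).mp hx
    have hsq : (67 * (V.card : ℝ)) * (67 * (V.card : ℝ))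
        < (100 * (a + b)) * (100 * (a + b)) := by
      apply mul_self_lt_mul_self
      · positivity
      · exact h67
    nlinarith [hedgeR, hsq, haR, hbR, hnR, sq_nonneg (a - b), hnpos]
end

section
/- Let F be a spreading linear triple system on a finite set V with |V| > 5. Then for any three distinct vertices x, y, z ∈ V, at least one of the pairs {x,y}, {y,z}, {x,z} is covered; that is, the complement of the skeleton of F contains no triangle. -/
open Finset

variable {α : Type*}

/-- In a spreading linear triple system on more than 5 vertices, any
three distinct vertices have at least one covered pair among them: the complement
of the skeleton is triangle-free. -/
theorem statement_7 {α : Type*} [DecidableEq α] (V : Finset α) (F : Finset (Finset α))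
    (hL : IsLinearTS V F) (hS : IsSpreading V F) (hV : 5 < V.card)
    (x y z : α) (hx : x ∈ V) (hy : y ∈ V) (hz : z ∈ V)
    (hxy : x ≠ y) (hyz : y ≠ z) (hxz : x ≠ z) :
    Covered F x y ∨ Covered F y z ∨ Covered F x z := by
  by_contra hc
  push_neg at hc
  obtain ⟨hcxy, hcyz, hcxz⟩ := hc
  set W : Finset α := {x, y, z} with hW
  have hWV : W ⊆ V := by
    intro a ha
    simp only [hW, mem_insert, mem_singleton] at ha
    rcases ha with rfl | rfl | rfl <;> assumption
  have hWcard : W.card = 3 := by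
    rw [hW, card_insert_of_notMem, card_insert_of_notMem, card_singleton]
    · simp [hyz]
    · simp [hxy, hxz]
  have hWF : W ∉ F := fun h => hcxy ⟨W, h, by simp [hW], by simp [hW]⟩
  have hcov : ∀ a ∈ W, ∀ b ∈ W, a ≠ b → ¬ Covered F a b := by
    intro a ha b hb hab
    simp only [hW, mem_insert, mem_singleton] at ha hb
    rcases ha with rfl | rfl | rfl <;> rcases hb with rfl | rfl | rfl <;>
      first
      | exact absurd rfl hab
      | exact hcxy
      | exact hcyz
      | exact hcxz
      | exact fun ⟨T, hT, h1, h2⟩ => hcxy ⟨T, hT, h2, h1⟩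
      | exact fun ⟨T, hT, h1, h2⟩ => hcyz ⟨T, hT, h2, h1⟩
      | exact fun ⟨T, hT, h1, h2⟩ => hcxz ⟨T, hT, h2, h1⟩
  have hnb : nbhd V F W = ∅ := by
    rw [eq_empty_iff_forall_notMem]
    intro w hw
    simp only [nbhd, mem_filter] at hw
    obtain ⟨-, a, ha, b, hb, hab, hT⟩ := hw
    exact hcov a ha b hb hab ⟨_, hT, by simp, by simp⟩
  have := hS W hWV (by omega) hWF W (subset_refl W) hWV hnb
  rw [this] at hWcard
  omega
end

section
/- Let F be a spreading linear triple system on a finite set V with |V| > 5. If v, u₁, u₂, u₃ ∈ V are four distinct vertices such that none of the pairs {v,u₁}, {v,u₂}, {v,u₃} is covered, then {u₁,u₂,u₃} is not a triple of F. -/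
open Finset

variable {α : Type*}

/-- In a spreading linear triple system on more than 5 vertices, if none
of the pairs `{v,u₁}, {v,u₂}, {v,u₃}` is covered (the four vertices being distinct),
then `{u₁,u₂,u₃}` is not a triple of the system. -/
theorem statement_8 {α : Type*} [DecidableEq α] (V : Finset α) (F : Finset (Finset α))
    (hL : IsLinearTS V F) (hS : IsSpreading V F) (hV : 5 < V.card)
    (v u₁ u₂ u₃ : α) (hv : v ∈ V) (h1 : u₁ ∈ V) (h2 : u₂ ∈ V) (h3 : u₃ ∈ V)
    (hvu₁ : v ≠ u₁) (hvu₂ : v ≠ u₂) (hvu₃ : v ≠ u₃)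
    (h12 : u₁ ≠ u₂) (h13 : u₁ ≠ u₃) (h23 : u₂ ≠ u₃)
    (hc1 : ¬Covered F v u₁) (hc2 : ¬Covered F v u₂) (hc3 : ¬Covered F v u₃) :
    ({u₁, u₂, u₃} : Finset α) ∉ F := by
  intro hT
  have hSsub : ({v, u₁, u₂, u₃} : Finset α) ⊆ V := by
    intro x hx
    simp only [Finset.mem_insert, Finset.mem_singleton] at hx
    rcases hx with rfl | rfl | rfl | rfl <;> assumption
  have hScard : ({v, u₁, u₂, u₃} : Finset α).card = 4 := by
    rw [Finset.card_insert_of_notMem (by simp [hvu₁, hvu₂, hvu₃]),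
        Finset.card_insert_of_notMem (by simp [h12, h13]),
        Finset.card_insert_of_notMem (by simp [h23]), Finset.card_singleton]
  have hnb : nbhd V F ({v, u₁, u₂, u₃} : Finset α) = ∅ := by
    rw [Finset.eq_empty_iff_forall_notMem]
    intro z hz
    rw [nbhd, Finset.mem_filter, Finset.mem_sdiff] at hz
    obtain ⟨⟨hzV, hzS⟩, x, hx, y, hy, hxy, hTxy⟩ := hz
    have hx' := hx
    have hy' := hy
    simp only [Finset.mem_insert, Finset.mem_singleton] at hx' hy'
    -- helper for the case both x and y are among u₁,u₂,u₃
    have linCase : x ∈ ({u₁, u₂, u₃} : Finset α) → y ∈ ({u₁, u₂, u₃} : Finset α) → False := by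
      intro hxu hyu
      have hle := hL.2 x (hSsub hx) y (hSsub hy) hxy
      have m1 : ({x, y, z} : Finset α) ∈ F.filter fun T => x ∈ T ∧ y ∈ T :=
        Finset.mem_filter.mpr ⟨hTxy, by simp, by simp⟩
      have m2 : ({u₁, u₂, u₃} : Finset α) ∈ F.filter fun T => x ∈ T ∧ y ∈ T :=
        Finset.mem_filter.mpr ⟨hT, hxu, hyu⟩
      have heq : ({x, y, z} : Finset α) = ({u₁, u₂, u₃} : Finset α) :=
        Finset.card_le_one.mp hle _ m1 _ m2
      have hzmem : z ∈ ({u₁, u₂, u₃} : Finset α) := heq ▸ (by simp : z ∈ ({x, y, z} : Finset α))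
      simp only [Finset.mem_insert, Finset.mem_singleton] at hzmem
      apply hzS
      rcases hzmem with rfl | rfl | rfl <;> simp
    rcases hx' with rfl | rfl | rfl | rfl
    · rcases hy' with rfl | rfl | rfl | rfl
      · exact hxy rfl
      · exact hc1 ⟨{x, y, z}, hTxy, by simp, by simp⟩
      · exact hc2 ⟨{x, y, z}, hTxy, by simp, by simp⟩
      · exact hc3 ⟨{x, y, z}, hTxy, by simp, by simp⟩
    · rcases hy' with rfl | rfl | rfl | rfl
      · exact hc1 ⟨{x, y, z}, hTxy, by simp, by simp⟩
      · exact hxy rfl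
      · exact linCase (by simp) (by simp)
      · exact linCase (by simp) (by simp)
    · rcases hy' with rfl | rfl | rfl | rfl
      · exact hc2 ⟨{x, y, z}, hTxy, by simp, by simp⟩
      · exact linCase (by simp) (by simp)
      · exact hxy rfl
      · exact linCase (by simp) (by simp)
    · rcases hy' with rfl | rfl | rfl | rfl
      · exact hc3 ⟨{x, y, z}, hTxy, by simp, by simp⟩
      · exact linCase (by simp) (by simp)
      · exact linCase (by simp) (by simp)
      · exact hxy rfl
  have hnotF : ({v, u₁, u₂, u₃} : Finset α) ∉ F := by
    intro hSF
    have := (hL.1 _ hSF).2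
    omega
  have hSV := hS _ hSsub (by omega) hnotF _ Finset.Subset.rfl hSsub hnb
  rw [← hSV] at hV
  omega
end

section
/- Let F be a spreading linear triple system on a finite set V with |V| > 5, and let T = {v₁,v₂,v₃} ∈ F. For i = 1,2,3 let N*_i be the set of vertices v ∈ V \ T such that among the pairs {v,v₁}, {v,v₂}, {v,v₃} exactly the pair {v,v_i} is covered. Then any two distinct vertices u, u' ∈ N*₁ ∪ N*₂ ∪ N*₃ form a covered pair {u,u'}; that is, N*₁ ∪ N*₂ ∪ N*₃ induces a complete graph in the skeleton of F. -/
open Finset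

variable {α : Type*}

private lemma covered_symm_s9 [DecidableEq α] {F : Finset (Finset α)} {a b : α}
    (h : Covered F a b) : Covered F b a := by
  obtain ⟨t, ht, ha, hb⟩ := h; exact ⟨t, ht, hb, ha⟩

private lemma statement9_aux [DecidableEq α] (V : Finset α) (F : Finset (Finset α))
    (hS : IsSpreading V F) (hV : 5 < V.card) (u u' w : α)
    (huV : u ∈ V) (hu'V : u' ∈ V) (hwV : w ∈ V)
    (huu' : u ≠ u') (huw : u ≠ w) (hu'w : u' ≠ w)
    (h1 : ¬Covered F u u') (h2 : ¬Covered F u w) (h3 : ¬Covered F u' w) : False := by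
  set W : Finset α := {u, u', w} with hW
  have hWV : W ⊆ V := by
    intro x hx
    simp only [hW, mem_insert, mem_singleton] at hx
    rcases hx with rfl | rfl | rfl <;> assumption
  have hcard : W.card = 3 := by
    rw [hW, card_insert_of_notMem (by simp [huu', huw]),
      card_insert_of_notMem (by simp [hu'w]), card_singleton]
  have hWnF : W ∉ F := fun hWF => h1 ⟨W, hWF, by simp [hW], by simp [hW]⟩
  have hnb : nbhd V F W = ∅ := by
    rw [Finset.eq_empty_iff_forall_notMem]
    intro z hz
    simp only [nbhd, mem_filter, mem_sdiff] at hz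
    obtain ⟨-, x, hx, y, hy, hxy, hF⟩ := hz
    have hcxy : Covered F x y := ⟨_, hF, by simp, by simp⟩
    simp only [hW, mem_insert, mem_singleton] at hx hy
    rcases hx with rfl | rfl | rfl <;> rcases hy with rfl | rfl | rfl <;>
      first
        | exact hxy rfl
        | exact h1 hcxy | exact h2 hcxy | exact h3 hcxy
        | exact h1 (covered_symm_s9 hcxy) | exact h2 (covered_symm_s9 hcxy)
        | exact h3 (covered_symm_s9 hcxy)
  have hWV' : W = V := hS W hWV (by omega) hWnF W (subset_refl W) hWV hnb
  rw [hWV'] at hcard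
  omega

/-- For a triple `T = {v₁,v₂,v₃}` of a spreading linear triple system on
more than 5 vertices, the private-neighbour sets `N*₁ ∪ N*₂ ∪ N*₃` induce a complete
graph in the skeleton. -/
theorem statement_9 {α : Type*} [DecidableEq α] (V : Finset α) (F : Finset (Finset α))
    (hL : IsLinearTS V F) (hS : IsSpreading V F) (hV : 5 < V.card)
    (v₁ v₂ v₃ : α) (h12 : v₁ ≠ v₂) (h13 : v₁ ≠ v₃) (h23 : v₂ ≠ v₃)
    (hT : ({v₁, v₂, v₃} : Finset α) ∈ F)
    (N₁ N₂ N₃ : Finset α)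
    (hN₁ : N₁ = (V \ ({v₁, v₂, v₃} : Finset α)).filter
      fun v => Covered F v v₁ ∧ ¬Covered F v v₂ ∧ ¬Covered F v v₃)
    (hN₂ : N₂ = (V \ ({v₁, v₂, v₃} : Finset α)).filter
      fun v => ¬Covered F v v₁ ∧ Covered F v v₂ ∧ ¬Covered F v v₃)
    (hN₃ : N₃ = (V \ ({v₁, v₂, v₃} : Finset α)).filter
      fun v => ¬Covered F v v₁ ∧ ¬Covered F v v₂ ∧ Covered F v v₃) :
    ∀ u ∈ N₁ ∪ N₂ ∪ N₃, ∀ u' ∈ N₁ ∪ N₂ ∪ N₃, u ≠ u' → Covered F u u' := by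
  have hTV := (hL.1 _ hT).1
  have hv1V : v₁ ∈ V := hTV (by simp)
  have hv2V : v₂ ∈ V := hTV (by simp)
  have hv3V : v₃ ∈ V := hTV (by simp)
  intro u hu u' hu' hne
  by_contra hcov
  subst hN₁ hN₂ hN₃
  simp only [mem_union, mem_filter, mem_sdiff, mem_insert, mem_singleton, not_or] at hu hu'
  obtain (⟨⟨huV, hu1, hu2, hu3⟩, hpa, hpb, hpc⟩ | ⟨⟨huV, hu1, hu2, hu3⟩, hpa, hpb, hpc⟩) |
    ⟨⟨huV, hu1, hu2, hu3⟩, hpa, hpb, hpc⟩ := hu <;>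
  obtain (⟨⟨hu'V, hu'1, hu'2, hu'3⟩, hqa, hqb, hqc⟩ | ⟨⟨hu'V, hu'1, hu'2, hu'3⟩, hqa, hqb, hqc⟩) |
    ⟨⟨hu'V, hu'1, hu'2, hu'3⟩, hqa, hqb, hqc⟩ := hu'
  · exact statement9_aux V F hS hV u u' v₂ huV hu'V hv2V hne hu2 hu'2 hcov hpb hqb
  · exact statement9_aux V F hS hV u u' v₃ huV hu'V hv3V hne hu3 hu'3 hcov hpc hqc
  · exact statement9_aux V F hS hV u u' v₂ huV hu'V hv2V hne hu2 hu'2 hcov hpb hqb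
  · exact statement9_aux V F hS hV u u' v₃ huV hu'V hv3V hne hu3 hu'3 hcov hpc hqc
  · exact statement9_aux V F hS hV u u' v₁ huV hu'V hv1V hne hu1 hu'1 hcov hpa hqa
  · exact statement9_aux V F hS hV u u' v₁ huV hu'V hv1V hne hu1 hu'1 hcov hpa hqa
  · exact statement9_aux V F hS hV u u' v₂ huV hu'V hv2V hne hu2 hu'2 hcov hpb hqb
  · exact statement9_aux V F hS hV u u' v₁ huV hu'V hv1V hne hu1 hu'1 hcov hpa hqa
  · exact statement9_aux V F hS hV u u' v₁ huV hu'V hv1V hne hu1 hu'1 hcov hpa hqa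
end

section
/- Let F be a spreading linear triple system on a finite set V with |V| > 5. For v ∈ V let d̄(v) denote the number of vertices u ∈ V, u ≠ v, such that the pair {u,v} is not covered. Then Σ_{v ∈ V} C(d̄(v), 2) = Σ_{T ∈ F} Val(T), where C(k,2) = k(k−1)/2 denotes the binomial coefficient. -/
open Finset

variable {α : Type*}

lemma cov_symm [DecidableEq α] {F : Finset (Finset α)} {x y : α} (h : Covered F x y) :
    Covered F y x := by
  obtain ⟨T, hT, hx, hy⟩ := h; exact ⟨T, hT, hy, hx⟩

lemma uniq_triple [DecidableEq α] {V : Finset α} {F : Finset (Finset α)}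
    (hL : IsLinearTS V F) {a b : α} {T T' : Finset α} (hT : T ∈ F) (hT' : T' ∈ F)
    (hne : a ≠ b) (haT : a ∈ T) (hbT : b ∈ T) (haT' : a ∈ T') (hbT' : b ∈ T') : T = T' := by
  have haV : a ∈ V := (hL.1 T hT).1 haT
  have hbV : b ∈ V := (hL.1 T hT).1 hbT
  have h := hL.2 a haV b hbV hne
  exact Finset.card_le_one.mp h T (mem_filter.2 ⟨hT, haT, hbT⟩)
    T' (mem_filter.2 ⟨hT', haT', hbT'⟩)

lemma claimA [DecidableEq α] {V : Finset α} {F : Finset (Finset α)}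
    (hS : IsSpreading V F) (hV : 5 < V.card) {u v w : α}
    (hu : u ∈ V) (hv : v ∈ V) (hw : w ∈ V)
    (huv : u ≠ v) (huw : u ≠ w) (hvw : v ≠ w)
    (h1 : ¬Covered F u v) (h2 : ¬Covered F w v) : Covered F u w := by
  by_contra h3
  have h1' : ¬Covered F v u := fun h => h1 (cov_symm h)
  have h2' : ¬Covered F v w := fun h => h2 (cov_symm h)
  have h3' : ¬Covered F w u := fun h => h3 (cov_symm h)
  set V' : Finset α := {u, v, w} with hV'
  have hsub : V' ⊆ V := by
    intro t ht
    simp only [hV', mem_insert, mem_singleton] at ht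
    rcases ht with rfl | rfl | rfl <;> assumption
  have hcard : V'.card = 3 := by
    rw [hV', Finset.card_insert_of_notMem (by simp [huv, huw]),
      Finset.card_insert_of_notMem (by simp [hvw]), Finset.card_singleton]
  have hnF : V' ∉ F := fun hmem => h1 ⟨V', hmem, by simp [hV'], by simp [hV']⟩
  have hnb : nbhd V F V' = ∅ := by
    rw [Finset.eq_empty_iff_forall_notMem]
    intro z hz
    simp only [nbhd, mem_filter, mem_sdiff] at hz
    obtain ⟨⟨hzV, hzV'⟩, x, hx, y, hy, hxy, hT⟩ := hz
    have hcov : Covered F x y := ⟨_, hT, by simp, by simp⟩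
    simp only [hV', mem_insert, mem_singleton] at hx hy
    rcases hx with rfl | rfl | rfl <;> rcases hy with rfl | rfl | rfl <;>
      first
        | exact hxy rfl
        | exact h1 hcov | exact h2 hcov | exact h3 hcov
        | exact h1' hcov | exact h2' hcov | exact h3' hcov
  have := hS V' hsub (by omega) hnF V' (Finset.Subset.refl _) hsub hnb
  rw [← this] at hV
  omega

lemma claimB [DecidableEq α] {V : Finset α} {F : Finset (Finset α)}
    (hL : IsLinearTS V F) (hS : IsSpreading V F) (hV : 5 < V.card) {u v w x : α}
    {T : Finset α} (hT : T ∈ F) (hv : v ∈ V)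
    (huT : u ∈ T) (hwT : w ∈ T) (hxT : x ∈ T)
    (huw : u ≠ w) (hxu : x ≠ u) (hxw : x ≠ w)
    (hvu : v ≠ u) (hvw : v ≠ w) (hvx : v ≠ x)
    (h1 : ¬Covered F u v) (h2 : ¬Covered F w v) : Covered F v x := by
  by_contra h3
  have hTV : T ⊆ V := (hL.1 T hT).1
  have hT3 : T.card = 3 := (hL.1 T hT).2
  have hTeq : T = {u, w, x} := by
    apply (Finset.eq_of_subset_of_card_le _ _).symm
    · intro t ht
      simp only [mem_insert, mem_singleton] at ht
      rcases ht with rfl | rfl | rfl <;> assumption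
    · rw [hT3, Finset.card_insert_of_notMem (by simp [huw, hxu.symm]),
        Finset.card_insert_of_notMem (by simp [hxw.symm]), Finset.card_singleton]
  have h1' : ¬Covered F v u := fun h => h1 (cov_symm h)
  have h2' : ¬Covered F v w := fun h => h2 (cov_symm h)
  have h3' : ¬Covered F x v := fun h => h3 (cov_symm h)
  set W : Finset α := {u, v, w, x} with hW
  have hsub : W ⊆ V := by
    intro t ht
    simp only [hW, mem_insert, mem_singleton] at ht
    rcases ht with rfl | rfl | rfl | rfl
    · exact hTV huT
    · exact hv
    · exact hTV hwT
    · exact hTV hxT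
  have hcard : W.card = 4 := by
    rw [hW, Finset.card_insert_of_notMem (by simp [hvu.symm, huw, hxu.symm]),
      Finset.card_insert_of_notMem (by simp [hvw, hvx]),
      Finset.card_insert_of_notMem (by simp [hxw.symm]), Finset.card_singleton]
  have hnF : W ∉ F := fun hmem => by
    have := (hL.1 W hmem).2
    omega
  have hkey : ∀ c ∈ W, c = v ∨ c ∈ T := by
    intro c hc
    simp only [hW, mem_insert, mem_singleton] at hc
    rcases hc with rfl | rfl | rfl | rfl
    · exact Or.inr huT
    · exact Or.inl rfl
    · exact Or.inr hwT
    · exact Or.inr hxT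
  have hnb : nbhd V F W = ∅ := by
    rw [Finset.eq_empty_iff_forall_notMem]
    intro z hz
    simp only [nbhd, mem_filter, mem_sdiff] at hz
    obtain ⟨⟨hzV, hzW⟩, a, ha, b, hb, hab, hTab⟩ := hz
    have hcov : Covered F a b := ⟨_, hTab, by simp, by simp⟩
    have hTmem : ∀ c ∈ T, ¬Covered F v c := by
      intro c hc
      rw [hTeq] at hc
      simp only [mem_insert, mem_singleton] at hc
      rcases hc with rfl | rfl | rfl
      · exact h1'
      · exact h2'
      · exact h3
    rcases hkey a ha with rfl | haT
    · rcases hkey b hb with rfl | hbT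
      · exact hab rfl
      · exact hTmem b hbT hcov
    · rcases hkey b hb with rfl | hbT
      · exact hTmem a haT (cov_symm hcov)
      · -- a, b ∈ T: by linearity {a,b,z} = T, so z ∈ T ⊆ W
        have heq : ({a, b, z} : Finset α) = T :=
          uniq_triple hL hTab hT hab (by simp) (by simp) haT hbT
        have hzT : z ∈ T := heq ▸ (by simp : z ∈ ({a, b, z} : Finset α))
        apply hzW
        rw [hTeq] at hzT
        simp only [mem_insert, mem_singleton] at hzT
        simp only [hW, mem_insert, mem_singleton]
        tauto
  have := hS W hsub (by omega) hnF W (Finset.Subset.refl _) hsub hnb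
  rw [← this] at hV
  omega

/-- In a spreading linear triple system on more than 5 vertices,
`Σ_{v ∈ V} C(d̄(v), 2) = Σ_{T ∈ F} Val(T)`, where `d̄(v)` is the number of vertices
`u ≠ v` with `{u,v}` uncovered. -/
theorem statement_11 {α : Type*} [DecidableEq α] (V : Finset α) (F : Finset (Finset α))
    (hL : IsLinearTS V F) (hS : IsSpreading V F) (hV : 5 < V.card) :
    ∑ v ∈ V, Nat.choose (((V.erase v).filter fun u => ¬Covered F u v).card) 2
      = ∑ T ∈ F, valT V F T := by
  classical
  set S : α → Finset α := fun v => (V.erase v).filter fun u => ¬Covered F u v with hSdef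
  set P : Finset α → Finset α := fun T =>
    (V \ T).filter fun v => (T.filter fun t => Covered F v t).card = 1 with hPdef
  have hLHS : ∑ v ∈ V, Nat.choose ((S v).card) 2
      = (V.sigma fun v => (S v).powersetCard 2).card := by
    rw [Finset.card_sigma]
    exact Finset.sum_congr rfl fun v _ => (Finset.card_powersetCard 2 (S v)).symm
  have hRHS : ∑ T ∈ F, valT V F T = (F.sigma fun T => P T).card := by
    rw [Finset.card_sigma]; rfl
  rw [hLHS, hRHS]
  refine (Finset.card_bij
    (fun b _ => (⟨b.2, b.1.filter fun t => ¬Covered F b.2 t⟩ : (_ : α) × Finset α))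
    ?_ ?_ ?_).symm
  · -- maps into the target
    rintro ⟨T, v⟩ hb
    simp only [Finset.mem_sigma, hPdef, mem_filter, mem_sdiff] at hb
    obtain ⟨hTF, ⟨hvV, hvT⟩, hone⟩ := hb
    have hTV : T ⊆ V := (hL.1 T hTF).1
    have hT3 : T.card = 3 := (hL.1 T hTF).2
    simp only [Finset.mem_sigma]
    constructor
    · exact hvV
    · rw [Finset.mem_powersetCard]
      constructor
      · intro t ht
        simp only [mem_filter] at ht
        simp only [hSdef, mem_filter, Finset.mem_erase]
        exact ⟨⟨fun h => hvT (h ▸ ht.1), hTV ht.1⟩, fun h => ht.2 (cov_symm h)⟩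
      · have := Finset.card_filter_add_card_filter_not
          (s := T) (p := fun t => Covered F v t)
        omega
  · -- injective
    rintro ⟨T, v⟩ hb ⟨T', v'⟩ hb' heq
    have hvv : v = v' := congrArg Sigma.fst heq
    subst hvv
    have heq2 : (T.filter fun t => ¬Covered F v t) = (T'.filter fun t => ¬Covered F v t) :=
      congrArg Sigma.snd heq
    simp only [Finset.mem_sigma, hPdef, mem_filter, mem_sdiff] at hb hb'
    obtain ⟨hTF, ⟨hvV, hvT⟩, hone⟩ := hb
    obtain ⟨hTF', _, _⟩ := hb'
    have hT3 : T.card = 3 := (hL.1 T hTF).2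
    have hcard2 : (T.filter fun t => ¬Covered F v t).card = 2 := by
      have := Finset.card_filter_add_card_filter_not
        (s := T) (p := fun t => Covered F v t)
      omega
    obtain ⟨a, b, hab, hset⟩ := Finset.card_eq_two.mp hcard2
    have haf : a ∈ T.filter fun t => ¬Covered F v t := by rw [hset]; simp
    have hbf : b ∈ T.filter fun t => ¬Covered F v t := by rw [hset]; simp
    have haf' : a ∈ T'.filter fun t => ¬Covered F v t := heq2 ▸ haf
    have hbf' : b ∈ T'.filter fun t => ¬Covered F v t := heq2 ▸ hbf
    simp only [mem_filter] at haf hbf haf' hbf'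
    have : T = T' := uniq_triple hL hTF hTF' hab haf.1 hbf.1 haf'.1 hbf'.1
    simp [this]
  · -- surjective
    rintro ⟨v, p⟩ hb
    simp only [Finset.mem_sigma, Finset.mem_powersetCard] at hb
    obtain ⟨hvV, hpS, hp2⟩ := hb
    obtain ⟨u, w, huw, rfl⟩ := Finset.card_eq_two.mp hp2
    have huS : u ∈ S v := hpS (by simp)
    have hwS : w ∈ S v := hpS (by simp)
    simp only [hSdef, mem_filter, Finset.mem_erase] at huS hwS
    obtain ⟨⟨huv, huV⟩, hucov⟩ := huS
    obtain ⟨⟨hwv, hwV⟩, hwcov⟩ := hwS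
    -- claim A: {u,w} is covered
    obtain ⟨T, hTF, huT, hwT⟩ := claimA hS hV huV hvV hwV huv huw (Ne.symm hwv) hucov hwcov
    have hTV : T ⊆ V := (hL.1 T hTF).1
    have hT3 : T.card = 3 := (hL.1 T hTF).2
    -- the third vertex x of T
    have hpT : ({u, w} : Finset α) ⊆ T := by
      intro t ht; simp only [mem_insert, mem_singleton] at ht
      rcases ht with rfl | rfl <;> assumption
    have hdc : (T \ {u, w}).card = 1 := by
      rw [Finset.card_sdiff_of_subset hpT, hT3, hp2]
    obtain ⟨x, hx⟩ := Finset.card_eq_one.mp hdc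
    have hxT : x ∈ T := by
      have : x ∈ T \ ({u, w} : Finset α) := hx ▸ Finset.mem_singleton_self x
      exact (Finset.mem_sdiff.mp this).1
    have hxp : x ∉ ({u, w} : Finset α) := by
      have : x ∈ T \ ({u, w} : Finset α) := hx ▸ Finset.mem_singleton_self x
      exact (Finset.mem_sdiff.mp this).2
    simp only [mem_insert, mem_singleton, not_or] at hxp
    obtain ⟨hxu, hxw⟩ := hxp
    have hTmem : ∀ t ∈ T, t = u ∨ t = w ∨ t = x := by
      intro t ht
      by_cases htp : t ∈ ({u, w} : Finset α)
      · simp only [mem_insert, mem_singleton] at htp; tauto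
      · have : t ∈ T \ ({u, w} : Finset α) := Finset.mem_sdiff.mpr ⟨ht, htp⟩
        rw [hx] at this
        simp only [mem_singleton] at this; tauto
    have hvx : v ≠ x := by
      rintro rfl
      exact hucov (cov_symm ⟨T, hTF, hxT, huT⟩)
    -- claim B: {v,x} is covered
    have hcovvx : Covered F v x := claimB hL hS hV hTF hvV huT hwT hxT huw hxu hxw
      (Ne.symm huv) (Ne.symm hwv) hvx hucov hwcov
    have hvT : v ∉ T := by
      intro h
      rcases hTmem v h with rfl | rfl | rfl
      · exact huv rfl
      · exact hwv rfl
      · exact hvx rfl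
    -- exactly one covered: the covered-filter is {x}
    have hfeq : (T.filter fun t => Covered F v t) = {x} := by
      ext t
      simp only [mem_filter, mem_singleton]
      constructor
      · rintro ⟨htT, hcov⟩
        rcases hTmem t htT with rfl | rfl | rfl
        · exact absurd (cov_symm hcov) hucov
        · exact absurd (cov_symm hcov) hwcov
        · rfl
      · rintro rfl; exact ⟨hxT, hcovvx⟩
    refine ⟨⟨T, v⟩, ?_, ?_⟩
    · simp only [Finset.mem_sigma, hPdef, mem_filter, mem_sdiff]
      exact ⟨hTF, ⟨hvV, hvT⟩, by rw [hfeq, Finset.card_singleton]⟩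
    · have hfeq2 : (T.filter fun t => ¬Covered F v t) = {u, w} := by
        ext t
        simp only [mem_filter, mem_insert, mem_singleton]
        constructor
        · rintro ⟨htT, hncov⟩
          rcases hTmem t htT with rfl | rfl | rfl
          · exact Or.inl rfl
          · exact Or.inr rfl
          · exact absurd hcovvx hncov
        · rintro (rfl | rfl)
          · exact ⟨huT, fun h => hucov (cov_symm h)⟩
          · exact ⟨hwT, fun h => hwcov (cov_symm h)⟩
      show (⟨v, T.filter fun t => ¬Covered F v t⟩ : (_ : α) × Finset α) = ⟨v, {u, w}⟩
      rw [hfeq2]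
end

section
/- Let F be a spreading linear triple system on a finite set V with |V| ≥ 4, and let E₀ be any subset of the set of pairs of distinct elements of V that are not covered by a triple of F. Form a new vertex set V* = V ∪ {v_e : e ∈ E₀}, where the v_e are new distinct vertices, and a new triple family F* = F ∪ {{x, y, v_e} : e = {x,y} ∈ E₀}. Then F* is a weakly spreading linear triple system on V*. -/
open Finset

variable {α : Type*}

/-- Crowning construction: adding a fresh vertex `ν e` on any subset
`E₀` of the uncovered pairs of a spreading linear triple system yields a weakly
spreading linear triple system. -/
theorem statement_17 {α : Type*} [DecidableEq α] (V : Finset α) (F : Finset (Finset α))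
    (hL : IsLinearTS V F) (hS : IsSpreading V F) (hV : 4 ≤ V.card)
    (E₀ : Finset (Finset α))
    (hE : ∀ e ∈ E₀, e ⊆ V ∧ e.card = 2 ∧ ¬∃ T ∈ F, e ⊆ T)
    (ν : Finset α → α)
    (hν : ∀ e ∈ E₀, ν e ∉ V)
    (hinj : Set.InjOn ν ↑E₀) :
    IsLinearTS (V ∪ E₀.image ν) (F ∪ E₀.image fun e => insert (ν e) e) ∧
    IsWeaklySpreading (V ∪ E₀.image ν) (F ∪ E₀.image fun e => insert (ν e) e) := by
  classical
  have hνe : ∀ e ∈ E₀, ν e ∉ e := fun e he h => hν e he ((hE e he).1 h)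
  have hcard3 : ∀ e ∈ E₀, (insert (ν e) e).card = 3 := by
    intro e he
    rw [Finset.card_insert_of_notMem (hνe e he), (hE e he).2.1]
  -- a pair of distinct V-vertices in a new triple forces e = {x,y}
  have hpair : ∀ e ∈ E₀, ∀ x y : α, x ≠ y → x ∈ insert (ν e) e → y ∈ insert (ν e) e →
      x ∈ V → y ∈ V → e = {x, y} := by
    intro e he x y hxy hx hy hxV hyV
    have hx' : x ∈ e := by
      rcases Finset.mem_insert.1 hx with rfl | h
      · exact absurd hxV (hν e he)
      · exact h
    have hy' : y ∈ e := by
      rcases Finset.mem_insert.1 hy with rfl | h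
      · exact absurd hyV (hν e he)
      · exact h
    have hsub : ({x, y} : Finset α) ⊆ e := by
      intro z hz; rcases Finset.mem_insert.1 hz with rfl | hz
      · exact hx'
      · rw [Finset.mem_singleton.1 hz]; exact hy'
    refine (Finset.eq_of_subset_of_card_le hsub ?_).symm
    rw [(hE e he).2.1, Finset.card_insert_of_notMem (by simp [hxy]), Finset.card_singleton]
  -- mixed case is impossible
  have hmix : ∀ T ∈ F, ∀ e ∈ E₀, ∀ x y : α, x ≠ y → x ∈ T → y ∈ T →
      x ∈ insert (ν e) e → y ∈ insert (ν e) e → False := by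
    intro T hT e he x y hxy hxT hyT hx hy
    have hxV : x ∈ V := (hL.1 T hT).1 hxT
    have hyV : y ∈ V := (hL.1 T hT).1 hyT
    have heq := hpair e he x y hxy hx hy hxV hyV
    exact (hE e he).2.2 ⟨T, hT, by
      rw [heq]; intro z hz
      rcases Finset.mem_insert.1 hz with rfl | hz
      · exact hxT
      · rw [Finset.mem_singleton.1 hz]; exact hyT⟩
  have hLTS : IsLinearTS (V ∪ E₀.image ν) (F ∪ E₀.image fun e => insert (ν e) e) := by
    constructor
    · intro T hT
      rcases Finset.mem_union.1 hT with h | h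
      · exact ⟨(hL.1 T h).1.trans Finset.subset_union_left, (hL.1 T h).2⟩
      · rcases Finset.mem_image.1 h with ⟨e, he, rfl⟩
        refine ⟨?_, hcard3 e he⟩
        intro z hz
        rcases Finset.mem_insert.1 hz with rfl | hz
        · exact Finset.mem_union_right _ (Finset.mem_image_of_mem _ he)
        · exact Finset.mem_union_left _ ((hE e he).1 hz)
    · intro x hx y hy hxy
      rw [Finset.card_le_one]
      intro T₁ h₁ T₂ h₂
      simp only [Finset.mem_filter] at h₁ h₂
      obtain ⟨h₁, hx₁, hy₁⟩ := h₁
      obtain ⟨h₂, hx₂, hy₂⟩ := h₂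
      rcases Finset.mem_union.1 h₁ with hA | hA <;> rcases Finset.mem_union.1 h₂ with hB | hB
      · -- both old
        by_contra hne
        have h2 : 1 < (F.filter fun T => x ∈ T ∧ y ∈ T).card :=
          Finset.one_lt_card.2 ⟨T₁, Finset.mem_filter.2 ⟨hA, hx₁, hy₁⟩,
            T₂, Finset.mem_filter.2 ⟨hB, hx₂, hy₂⟩, hne⟩
        have hxV : x ∈ V := (hL.1 T₁ hA).1 hx₁
        have hyV : y ∈ V := (hL.1 T₁ hA).1 hy₁
        exact absurd (hL.2 x hxV y hyV hxy) (not_le.2 h2)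
      · rcases Finset.mem_image.1 hB with ⟨e, he, rfl⟩
        exact absurd (hmix T₁ hA e he x y hxy hx₁ hy₁ hx₂ hy₂) not_false
      · rcases Finset.mem_image.1 hA with ⟨e, he, rfl⟩
        exact absurd (hmix T₂ hB e he x y hxy hx₂ hy₂ hx₁ hy₁) not_false
      · rcases Finset.mem_image.1 hA with ⟨e, he, rfl⟩
        rcases Finset.mem_image.1 hB with ⟨e', he', rfl⟩
        suffices h : e = e' by rw [h]
        -- x, y from intersection
        have hmem : ∀ z : α, z ∈ insert (ν e) e → z ∈ insert (ν e') e' → e = e' ∨ (z ∈ e ∧ z ∈ e') := by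
          intro z hz hz'
          rcases Finset.mem_insert.1 hz with rfl | hz
          · rcases Finset.mem_insert.1 hz' with h' | h'
            · exact Or.inl (hinj he he' h')
            · exact absurd ((hE e' he').1 h') (hν e he)
          · rcases Finset.mem_insert.1 hz' with h' | h'
            · exact absurd ((hE e he).1 (h' ▸ hz)) (hν e' he')
            · exact Or.inr ⟨hz, h'⟩
        rcases hmem x hx₁ hx₂ with h | ⟨hxe, hxe'⟩
        · exact h
        rcases hmem y hy₁ hy₂ with h | ⟨hye, hye'⟩
        · exact h
        have hxV : x ∈ V := (hE e he).1 hxe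
        have hyV : y ∈ V := (hE e he).1 hye
        rw [hpair e he x y hxy hx₁ hy₁ hxV hyV, hpair e' he' x y hxy hx₂ hy₂ hxV hyV]
  refine ⟨hLTS, ?_⟩
  intro F' hF' hcard W hW hWV hnbhd
  obtain ⟨A, hA, B, hB, hAB⟩ := Finset.one_lt_card.1 hcard
  have hAW : A ⊆ W := (Finset.subset_biUnion_of_mem id hA).trans hW
  have hBW : B ⊆ W := (Finset.subset_biUnion_of_mem id hB).trans hW
  -- key facts about W ∩ V
  have hkey : 3 ≤ (W ∩ V).card ∧ W ∩ V ∉ F := by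
    have holdsub : ∀ T ∈ F, T ⊆ W → T ⊆ W ∩ V :=
      fun T hT hTW => Finset.subset_inter hTW (hL.1 T hT).1
    have hnewsub : ∀ e ∈ E₀, insert (ν e) e ⊆ W → e ⊆ W ∩ V := by
      intro e he h
      exact Finset.subset_inter ((Finset.subset_insert _ _).trans h) (hE e he).1
    have hnotF : ∀ e ∈ E₀, e ⊆ W ∩ V → W ∩ V ∉ F := by
      intro e he hsub hF
      exact (hE e he).2.2 ⟨W ∩ V, hF, hsub⟩
    rcases Finset.mem_union.1 (hF' hA) with hA' | hA' <;>
      rcases Finset.mem_union.1 (hF' hB) with hB' | hB'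
    · -- both old
      have h1 : A ⊆ W ∩ V := holdsub A hA' hAW
      have h2 : B ⊆ W ∩ V := holdsub B hB' hBW
      have h4 : 4 ≤ (W ∩ V).card := by
        by_contra hlt
        have h3 : (W ∩ V).card ≤ 3 := by omega
        have hAe : A = W ∩ V := Finset.eq_of_subset_of_card_le h1 (by rw [(hL.1 A hA').2]; exact h3)
        have hBe : B = W ∩ V := Finset.eq_of_subset_of_card_le h2 (by rw [(hL.1 B hB').2]; exact h3)
        exact hAB (hAe.trans hBe.symm)
      refine ⟨by omega, fun hF => ?_⟩
      have := (hL.1 _ hF).2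
      omega
    · rcases Finset.mem_image.1 hB' with ⟨e, he, rfl⟩
      have h1 : A ⊆ W ∩ V := holdsub A hA' hAW
      refine ⟨?_, hnotF e he (hnewsub e he hBW)⟩
      calc 3 = A.card := ((hL.1 A hA').2).symm
        _ ≤ _ := Finset.card_le_card h1
    · rcases Finset.mem_image.1 hA' with ⟨e, he, rfl⟩
      have h1 : B ⊆ W ∩ V := holdsub B hB' hBW
      refine ⟨?_, hnotF e he (hnewsub e he hAW)⟩
      calc 3 = B.card := ((hL.1 B hB').2).symm
        _ ≤ _ := Finset.card_le_card h1
    · rcases Finset.mem_image.1 hA' with ⟨e, he, rfl⟩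
      rcases Finset.mem_image.1 hB' with ⟨e', he', rfl⟩
      have hee' : e ≠ e' := by rintro rfl; exact hAB rfl
      have h1 : e ⊆ W ∩ V := hnewsub e he hAW
      have h2 : e' ⊆ W ∩ V := hnewsub e' he' hBW
      refine ⟨?_, hnotF e he h1⟩
      have hss : e ⊂ e ∪ e' := by
        refine Finset.ssubset_iff_subset_ne.2 ⟨Finset.subset_union_left, ?_⟩
        intro h
        have : e' ⊆ e := h ▸ Finset.subset_union_right
        exact hee' (Finset.eq_of_subset_of_card_le this (by rw [(hE e he).2.1, (hE e' he').2.1])).symm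
      have hcu : 2 < (e ∪ e').card := by
        have := Finset.card_lt_card hss
        rw [(hE e he).2.1] at this
        exact this
      calc 3 ≤ (e ∪ e').card := hcu
        _ ≤ _ := Finset.card_le_card (Finset.union_subset h1 h2)
  -- neighbourhood of W ∩ V w.r.t. F is empty
  have hnb : nbhd V F (W ∩ V) = ∅ := by
    rw [Finset.eq_empty_iff_forall_notMem]
    intro z hz
    rw [nbhd, Finset.mem_filter, Finset.mem_sdiff] at hz
    obtain ⟨⟨hzV, hzW⟩, x, hxW, y, hyW, hxy, hT⟩ := hz
    have hzW' : z ∉ W := fun h => hzW (Finset.mem_inter.2 ⟨h, hzV⟩)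
    have : z ∈ nbhd (V ∪ E₀.image ν) (F ∪ E₀.image fun e => insert (ν e) e) W := by
      rw [nbhd, Finset.mem_filter, Finset.mem_sdiff]
      exact ⟨⟨Finset.mem_union_left _ hzV, hzW'⟩, x, (Finset.mem_inter.1 hxW).1,
        y, (Finset.mem_inter.1 hyW).1, hxy, Finset.mem_union_left _ hT⟩
    rw [hnbhd] at this
    exact absurd this (Finset.notMem_empty z)
  have hWVeq : W ∩ V = V :=
    hS (W ∩ V) Finset.inter_subset_right hkey.1 hkey.2 (W ∩ V) (Finset.Subset.refl _)
      Finset.inter_subset_right hnb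
  have hVW : V ⊆ W := by rw [← hWVeq]; exact Finset.inter_subset_left
  have hnuW : ∀ e ∈ E₀, ν e ∈ W := by
    intro e he
    by_contra hne
    obtain ⟨x, y, hxy, hexy⟩ := Finset.card_eq_two.1 (hE e he).2.1
    have hxW : x ∈ W := hVW ((hE e he).1 (by rw [hexy]; simp))
    have hyW : y ∈ W := hVW ((hE e he).1 (by rw [hexy]; simp))
    have htrip : ({x, y, ν e} : Finset α) ∈ F ∪ E₀.image fun e => insert (ν e) e := by
      refine Finset.mem_union_right _ (Finset.mem_image.2 ⟨e, he, ?_⟩)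
      rw [hexy]
      ext z
      simp only [Finset.mem_insert, Finset.mem_singleton]
      tauto
    have : ν e ∈ nbhd (V ∪ E₀.image ν) (F ∪ E₀.image fun e => insert (ν e) e) W := by
      rw [nbhd, Finset.mem_filter, Finset.mem_sdiff]
      exact ⟨⟨Finset.mem_union_right _ (Finset.mem_image_of_mem _ he), hne⟩,
        x, hxW, y, hyW, hxy, htrip⟩
    rw [hnbhd] at this
    exact absurd this (Finset.notMem_empty _)
  refine Finset.Subset.antisymm hWV (Finset.union_subset hVW ?_)
  intro z hz
  obtain ⟨e, he, rfl⟩ := Finset.mem_image.1 hz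
  exact hnuW e he
end
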